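/- arXiv:1207.5397 — 4 statements merged into one kernel-verified Lean document; each statement's English description precedes it below -/
import Mathlib

section
/- Let A = AP(ℝ^N) be the algebra of almost periodic continuous functions on ℝ^N: the closure, in the supremum norm, of the set of finite ℂ-linear combinations of the functions y ↦ exp(2πi k·y), k ∈ ℝ^N, inside the bounded continuous functions ℝ^N → ℂ. Then Δ(A) carries the structure of a compact abelian topological group: there exist a continuous multiplication m : Δ(A) × Δ(A) → Δ(A) and a continuous inversion making Δ(A) an abelian topological group with identity φ_0, such that m(φ_y, φ_z) = φ_{y+z} for all y, z ∈ ℝ^N, and the evaluation map y ↦ φ_y is a continuous group homomorphism with dense range. -/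
set_option maxHeartbeats 1000000
set_option synthInstance.maxHeartbeats 200000

open MeasureTheory Filter Topology BoundedContinuousFunction

noncomputable section

/-- The exponential `y ↦ exp(2πi k·y)` as a bounded continuous function `ℝ^N → ℂ`. -/
def expFun {N : ℕ} (k : Fin N → ℝ) : (Fin N → ℝ) →ᵇ ℂ :=
  BoundedContinuousFunction.ofNormedAddCommGroup
    (fun x => Complex.exp ((↑(2 * Real.pi * ∑ i, k i * x i) : ℂ) * Complex.I))
    (by fun_prop) 1
    (fun x => by
      rw [Complex.norm_exp_ofReal_mul_I])

namespace APaux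

variable {N : ℕ}

lemma expFun_apply (k x : Fin N → ℝ) :
    expFun k x = Complex.exp ((↑(2 * Real.pi * ∑ i, k i * x i) : ℂ) * Complex.I) := rfl

lemma expFun_mul (k l : Fin N → ℝ) : expFun k * expFun l = expFun (k + l) := by
  ext x
  simp only [BoundedContinuousFunction.mul_apply, expFun_apply]
  rw [← Complex.exp_add]
  congr 1
  rw [← add_mul]
  norm_cast
  simp only [Pi.add_apply, add_mul, Finset.sum_add_distrib]
  ring

lemma expFun_zero : expFun (0 : Fin N → ℝ) = 1 := by
  ext x
  simp [expFun_apply]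

lemma expFun_apply_zero (k : Fin N → ℝ) : expFun k 0 = 1 := by
  simp [expFun_apply]

lemma expFun_add_apply (k y z : Fin N → ℝ) :
    expFun k (y + z) = expFun k y * expFun k z := by
  simp only [expFun_apply]
  rw [← Complex.exp_add]
  congr 1
  rw [← add_mul]
  norm_cast
  simp only [Pi.add_apply, mul_add, Finset.sum_add_distrib]

lemma star_expFun (k : Fin N → ℝ) : star (expFun k) = expFun (-k) := by
  ext x
  simp only [BoundedContinuousFunction.star_apply, expFun_apply]
  rw [show (star : ℂ → ℂ) = (starRingEnd ℂ) from rfl, ← Complex.exp_conj]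
  congr 1
  rw [map_mul, Complex.conj_ofReal, Complex.conj_I, mul_neg, ← neg_mul]
  norm_cast
  simp only [Pi.neg_apply, neg_mul, Finset.sum_neg_distrib]
  ring


/-- The span of the exponentials. -/
def Sp (N : ℕ) : Submodule ℂ ((Fin N → ℝ) →ᵇ ℂ) :=
  Submodule.span ℂ (Set.range (expFun (N := N)))

/-- Translation by `y`. -/
def tr (y : Fin N → ℝ) (u : (Fin N → ℝ) →ᵇ ℂ) : (Fin N → ℝ) →ᵇ ℂ :=
  u.compContinuous ⟨fun x => x + y, by continuity⟩

/-- Reflection. -/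
def ng (u : (Fin N → ℝ) →ᵇ ℂ) : (Fin N → ℝ) →ᵇ ℂ :=
  u.compContinuous ⟨fun x => -x, by continuity⟩

lemma tr_apply (y : Fin N → ℝ) (u : (Fin N → ℝ) →ᵇ ℂ) (x : Fin N → ℝ) :
    tr y u x = u (x + y) := rfl

lemma ng_apply (u : (Fin N → ℝ) →ᵇ ℂ) (x : Fin N → ℝ) : ng u x = u (-x) := rfl

lemma tr_add (y : Fin N → ℝ) (u v : (Fin N → ℝ) →ᵇ ℂ) :
    tr y (u + v) = tr y u + tr y v := by ext x; simp [tr_apply]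

lemma tr_smul (y : Fin N → ℝ) (c : ℂ) (u : (Fin N → ℝ) →ᵇ ℂ) :
    tr y (c • u) = c • tr y u := by ext x; simp [tr_apply]

lemma tr_mul (y : Fin N → ℝ) (u v : (Fin N → ℝ) →ᵇ ℂ) :
    tr y (u * v) = tr y u * tr y v := by ext x; simp [tr_apply]

lemma tr_one (y : Fin N → ℝ) : tr y (1 : (Fin N → ℝ) →ᵇ ℂ) = 1 := by
  ext x; simp [tr_apply]

lemma tr_zero (y : Fin N → ℝ) : tr y (0 : (Fin N → ℝ) →ᵇ ℂ) = 0 := by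
  ext x; simp [tr_apply]

lemma ng_add (u v : (Fin N → ℝ) →ᵇ ℂ) : ng (u + v) = ng u + ng v := by
  ext x; simp [ng_apply]

lemma ng_smul (c : ℂ) (u : (Fin N → ℝ) →ᵇ ℂ) : ng (c • u) = c • ng u := by
  ext x; simp [ng_apply]

lemma ng_mul (u v : (Fin N → ℝ) →ᵇ ℂ) : ng (u * v) = ng u * ng v := by
  ext x; simp [ng_apply]

lemma ng_one : ng (1 : (Fin N → ℝ) →ᵇ ℂ) = 1 := by ext x; simp [ng_apply]

lemma norm_tr_le (y : Fin N → ℝ) (u : (Fin N → ℝ) →ᵇ ℂ) : ‖tr y u‖ ≤ ‖u‖ :=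
  BoundedContinuousFunction.norm_compContinuous_le _ _

lemma norm_ng_le (u : (Fin N → ℝ) →ᵇ ℂ) : ‖ng u‖ ≤ ‖u‖ :=
  BoundedContinuousFunction.norm_compContinuous_le _ _

lemma tr_expFun (y : Fin N → ℝ) (k : Fin N → ℝ) :
    tr y (expFun k) = expFun k y • expFun k := by
  ext x
  rw [tr_apply, BoundedContinuousFunction.smul_apply, add_comm x y,
    expFun_add_apply, smul_eq_mul]

lemma ng_expFun (k : Fin N → ℝ) : ng (expFun k) = expFun (-k) := by
  ext x
  rw [ng_apply, expFun_apply, expFun_apply]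
  norm_cast
  simp [Pi.neg_apply, Finset.sum_neg_distrib]

lemma tr_mem_span (y : Fin N → ℝ) {u : (Fin N → ℝ) →ᵇ ℂ} (hu : u ∈ Sp N) :
    tr y u ∈ Sp N := by
  induction hu using Submodule.span_induction with
  | mem x hx =>
      obtain ⟨k, rfl⟩ := hx
      rw [tr_expFun]
      exact Submodule.smul_mem _ _ (Submodule.subset_span ⟨k, rfl⟩)
  | zero => rw [tr_zero]; exact Submodule.zero_mem _
  | add a b _ _ ha hb => rw [tr_add]; exact Submodule.add_mem _ ha hb
  | smul c a _ ha => rw [tr_smul]; exact Submodule.smul_mem _ _ ha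

lemma ng_mem_span {u : (Fin N → ℝ) →ᵇ ℂ} (hu : u ∈ Sp N) : ng u ∈ Sp N := by
  induction hu using Submodule.span_induction with
  | mem x hx =>
      obtain ⟨k, rfl⟩ := hx
      rw [ng_expFun]
      exact Submodule.subset_span ⟨-k, rfl⟩
  | zero =>
      have : ng (0 : (Fin N → ℝ) →ᵇ ℂ) = 0 := by ext x; simp [ng_apply]
      rw [this]; exact Submodule.zero_mem _
  | add a b _ _ ha hb => rw [ng_add]; exact Submodule.add_mem _ ha hb
  | smul c a _ ha => rw [ng_smul]; exact Submodule.smul_mem _ _ ha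

lemma star_mem_span {u : (Fin N → ℝ) →ᵇ ℂ} (hu : u ∈ Sp N) : star u ∈ Sp N := by
  induction hu using Submodule.span_induction with
  | mem x hx =>
      obtain ⟨k, rfl⟩ := hx
      rw [star_expFun]
      exact Submodule.subset_span ⟨-k, rfl⟩
  | zero => rw [star_zero]; exact Submodule.zero_mem _
  | add a b _ _ ha hb => rw [star_add]; exact Submodule.add_mem _ ha hb
  | smul c a _ ha =>
      rw [star_smul]
      exact Submodule.smul_mem _ _ ha

lemma tr_mem_closure (y : Fin N → ℝ) {u : (Fin N → ℝ) →ᵇ ℂ}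
    (hu : u ∈ closure (Sp N : Set ((Fin N → ℝ) →ᵇ ℂ))) :
    tr y u ∈ closure (Sp N : Set ((Fin N → ℝ) →ᵇ ℂ)) :=
  map_mem_closure (BoundedContinuousFunction.continuous_compContinuous _) hu
    fun _ hx => tr_mem_span y hx

lemma ng_mem_closure {u : (Fin N → ℝ) →ᵇ ℂ}
    (hu : u ∈ closure (Sp N : Set ((Fin N → ℝ) →ᵇ ℂ))) :
    ng u ∈ closure (Sp N : Set ((Fin N → ℝ) →ᵇ ℂ)) :=
  map_mem_closure (BoundedContinuousFunction.continuous_compContinuous _) hu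
    fun _ hx => ng_mem_span hx

lemma star_mem_closure {u : (Fin N → ℝ) →ᵇ ℂ}
    (hu : u ∈ closure (Sp N : Set ((Fin N → ℝ) →ᵇ ℂ))) :
    star u ∈ closure (Sp N : Set ((Fin N → ℝ) →ᵇ ℂ)) :=
  map_mem_closure continuous_star hu fun _ hx => star_mem_span hx


section CharStuff

variable (A : Subalgebra ℂ ((Fin N → ℝ) →ᵇ ℂ))

/-- Make a character from a multiplicative unital bounded linear functional. -/
def mkChar (f : A →ₗ[ℂ] ℂ) (C : ℝ) (hb : ∀ u, ‖f u‖ ≤ C * ‖u‖)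
    (h1 : f 1 = 1) (hm : ∀ u v, f (u * v) = f u * f v) :
    WeakDual.characterSpace ℂ A :=
  ⟨f.mkContinuous C hb, by
    refine ⟨fun h => one_ne_zero (α := ℂ) ?_, hm⟩
    have h2 := DFunLike.congr_fun h (1 : A)
    have h3 : f (1 : A) = 0 := h2
    rw [h1] at h3
    exact h3⟩

lemma mkChar_apply (f : A →ₗ[ℂ] ℂ) (C : ℝ) (hb : ∀ u, ‖f u‖ ≤ C * ‖u‖)
    (h1 : f 1 = 1) (hm : ∀ u v, f (u * v) = f u * f v) (u : A) :
    mkChar A f C hb h1 hm u = f u := rfl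

variable {A}
variable (hA : (A : Set ((Fin N → ℝ) →ᵇ ℂ)) =
      closure ((Sp N : Submodule ℂ _) : Set ((Fin N → ℝ) →ᵇ ℂ)))

include hA

lemma isClosed_A : IsClosed (A : Set ((Fin N → ℝ) →ᵇ ℂ)) := by
  rw [hA]; exact isClosed_closure

lemma expFun_mem (k : Fin N → ℝ) : expFun k ∈ A := by
  rw [← SetLike.mem_coe, hA]
  exact subset_closure (Submodule.subset_span ⟨k, rfl⟩)

lemma span_le_A {u : (Fin N → ℝ) →ᵇ ℂ} (hu : u ∈ Sp N) : u ∈ A := by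
  rw [← SetLike.mem_coe, hA]; exact subset_closure hu

lemma tr_mem {u : (Fin N → ℝ) →ᵇ ℂ} (y : Fin N → ℝ) (hu : u ∈ A) : tr y u ∈ A := by
  rw [← SetLike.mem_coe, hA] at hu ⊢
  exact tr_mem_closure y hu

lemma ng_mem {u : (Fin N → ℝ) →ᵇ ℂ} (hu : u ∈ A) : ng u ∈ A := by
  rw [← SetLike.mem_coe, hA] at hu ⊢
  exact ng_mem_closure hu

lemma star_mem' {u : (Fin N → ℝ) →ᵇ ℂ} (hu : u ∈ A) : star u ∈ A := by
  rw [← SetLike.mem_coe, hA] at hu ⊢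
  exact star_mem_closure hu

omit hA in
lemma normOneClass_A : ‖(1 : A)‖ = 1 := by
  have : ‖(1 : A)‖ = ‖((1 : A) : (Fin N → ℝ) →ᵇ ℂ)‖ := rfl
  rw [this, OneMemClass.coe_one, norm_one]

omit hA in
lemma norm_coe_A (u : A) : ‖u‖ = ‖(u : (Fin N → ℝ) →ᵇ ℂ)‖ := rfl

/-- Characters are norm-contractive. -/
lemma char_norm_le (t : WeakDual.characterSpace ℂ A) (u : A) : ‖t u‖ ≤ ‖u‖ := by
  haveI : CompleteSpace A := (isClosed_A hA).completeSpace_coe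
  haveI : NormOneClass A := ⟨normOneClass_A⟩
  exact AlgHom.norm_apply_le_self t u

/-- Characters agree if they agree on the exponentials. -/
lemma char_ext {s s' : WeakDual.characterSpace ℂ A}
    (h : ∀ k : Fin N → ℝ, s ⟨expFun k, expFun_mem hA k⟩ = s' ⟨expFun k, expFun_mem hA k⟩) :
    s = s' := by
  ext u
  have hu : (u : (Fin N → ℝ) →ᵇ ℂ) ∈ closure (Sp N : Set ((Fin N → ℝ) →ᵇ ℂ)) := by
    rw [← hA]; exact u.2
  obtain ⟨v, hv, hvlim⟩ := mem_closure_iff_seq_limit.mp hu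
  -- values agree on span
  have hspan : ∀ x, x ∈ Sp N → ∀ hx : x ∈ A, s ⟨x, hx⟩ = s' ⟨x, hx⟩ := by
    intro x hxs
    induction hxs using Submodule.span_induction with
    | mem x hx =>
        intro hxA
        obtain ⟨k, rfl⟩ := hx
        exact h k
    | zero =>
        intro hxA
        have : (⟨0, hxA⟩ : A) = 0 := rfl
        rw [this, map_zero, map_zero]
    | add a b ha hb iha ihb =>
        intro hxA
        have : (⟨a + b, hxA⟩ : A) = ⟨a, span_le_A hA ha⟩ + ⟨b, span_le_A hA hb⟩ := rfl
        rw [this, map_add, map_add, iha _, ihb _]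
    | smul c a ha iha =>
        intro hxA
        have : (⟨c • a, hxA⟩ : A) = c • ⟨a, span_le_A hA ha⟩ := rfl
        rw [this, _root_.map_smul, _root_.map_smul, iha _]
  -- the sequence in A
  set un : ℕ → A := fun n => ⟨v n, span_le_A hA (hv n)⟩ with hun
  have hlimA : Tendsto un atTop (𝓝 u) := by
    rw [tendsto_subtype_rng]
    exact hvlim
  have h1 : Tendsto (fun n => s (un n)) atTop (𝓝 (s u)) :=
    ((map_continuous s).tendsto u).comp hlimA
  have h2 : Tendsto (fun n => s' (un n)) atTop (𝓝 (s' u)) :=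
    ((map_continuous s').tendsto u).comp hlimA
  have heq : (fun n => s (un n)) = fun n => s' (un n) := by
    funext n
    exact hspan _ (hv n) _
  rw [heq] at h1
  exact tendsto_nhds_unique h1 h2


lemma tr_sub (y : Fin N → ℝ) (u v : (Fin N → ℝ) →ᵇ ℂ) :
    tr y (u - v) = tr y u - tr y v := by ext x; simp [tr_apply]

/-- Key existence: for a character `t` and `u ∈ A`, the function `y ↦ t (τ_y u)` is in `A`. -/
lemma exists_T (t : WeakDual.characterSpace ℂ A) (u : A) :
    ∃ W : A, ∀ y, (W : (Fin N → ℝ) →ᵇ ℂ) y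
      = t ⟨tr y (u : (Fin N → ℝ) →ᵇ ℂ), tr_mem hA y u.2⟩ := by
  classical
  -- Step 1: the span case
  have hstep : ∀ x, x ∈ Sp N → ∃ w : (Fin N → ℝ) →ᵇ ℂ, w ∈ Sp N ∧
      ∀ (y : Fin N → ℝ) (hm : tr y x ∈ A), w y = t ⟨tr y x, hm⟩ := by
    intro x hx
    induction hx using Submodule.span_induction with
    | mem x hx =>
        obtain ⟨k, rfl⟩ := hx
        refine ⟨t ⟨expFun k, expFun_mem hA k⟩ • expFun k,
          Submodule.smul_mem _ _ (Submodule.subset_span ⟨k, rfl⟩), fun y hm => ?_⟩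
        have h1 : (⟨tr y (expFun k), hm⟩ : A)
            = (expFun k y) • ⟨expFun k, expFun_mem hA k⟩ := by
          apply Subtype.ext
          simp [tr_expFun]
        rw [h1, _root_.map_smul]
        simp [smul_eq_mul]
        ring
    | zero =>
        refine ⟨0, Submodule.zero_mem _, fun y hm => ?_⟩
        have h1 : (⟨tr y (0 : (Fin N → ℝ) →ᵇ ℂ), hm⟩ : A) = 0 := by
          apply Subtype.ext; simp [tr_zero]
        rw [h1, map_zero]
        simp
    | add a b ha hb iha ihb =>
        obtain ⟨w1, hw1, hw1v⟩ := iha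
        obtain ⟨w2, hw2, hw2v⟩ := ihb
        refine ⟨w1 + w2, Submodule.add_mem _ hw1 hw2, fun y hm => ?_⟩
        have hma : tr y a ∈ A := tr_mem hA y (span_le_A hA ha)
        have hmb : tr y b ∈ A := tr_mem hA y (span_le_A hA hb)
        have h1 : (⟨tr y (a + b), hm⟩ : A) = ⟨tr y a, hma⟩ + ⟨tr y b, hmb⟩ := by
          apply Subtype.ext; simp [tr_add]
        rw [h1, map_add, BoundedContinuousFunction.add_apply, hw1v y hma, hw2v y hmb]
    | smul c a ha iha =>
        obtain ⟨w1, hw1, hw1v⟩ := iha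
        refine ⟨c • w1, Submodule.smul_mem _ _ hw1, fun y hm => ?_⟩
        have hma : tr y a ∈ A := tr_mem hA y (span_le_A hA ha)
        have h1 : (⟨tr y (c • a), hm⟩ : A) = c • ⟨tr y a, hma⟩ := by
          apply Subtype.ext; simp [tr_smul]
        rw [h1, _root_.map_smul, BoundedContinuousFunction.smul_apply, hw1v y hma]
  -- Step 2: pass to the closure
  have hu : (u : (Fin N → ℝ) →ᵇ ℂ) ∈ closure (Sp N : Set ((Fin N → ℝ) →ᵇ ℂ)) := by
    rw [← hA]; exact u.2
  obtain ⟨v, hv, hvlim⟩ := mem_closure_iff_seq_limit.mp hu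
  choose w hwS hwval using fun n => hstep (v n) (hv n)
  set f : (Fin N → ℝ) → ℂ :=
    fun y => t ⟨tr y (u : (Fin N → ℝ) →ᵇ ℂ), tr_mem hA y u.2⟩ with hf
  have hnormlim : Tendsto (fun n => ‖(u : (Fin N → ℝ) →ᵇ ℂ) - v n‖) atTop (𝓝 0) := by
    have := (tendsto_iff_norm_sub_tendsto_zero).mp hvlim
    simpa [norm_sub_rev] using this
  have hest : ∀ n y, ‖f y - w n y‖ ≤ ‖(u : (Fin N → ℝ) →ᵇ ℂ) - v n‖ := by
    intro n y
    have hm1 : tr y (u : (Fin N → ℝ) →ᵇ ℂ) ∈ A := tr_mem hA y u.2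
    have hm2 : tr y (v n) ∈ A := tr_mem hA y (span_le_A hA (hv n))
    rw [hf]
    simp only
    rw [hwval n y hm2]
    have hmem : ((u : (Fin N → ℝ) →ᵇ ℂ) - v n) ∈ A := A.sub_mem u.2 (span_le_A hA (hv n))
    have hsub : (⟨tr y (u : (Fin N → ℝ) →ᵇ ℂ), hm1⟩ : A) - ⟨tr y (v n), hm2⟩
        = ⟨tr y ((u : (Fin N → ℝ) →ᵇ ℂ) - v n), tr_mem hA y hmem⟩ := by
      apply Subtype.ext; simp [tr_sub]; rfl
    calc ‖t ⟨tr y (u : (Fin N → ℝ) →ᵇ ℂ), hm1⟩ - t ⟨tr y (v n), hm2⟩‖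
        = ‖t ((⟨tr y (u : (Fin N → ℝ) →ᵇ ℂ), hm1⟩ : A) - ⟨tr y (v n), hm2⟩)‖ := by
          rw [map_sub]
      _ ≤ ‖(⟨tr y (u : (Fin N → ℝ) →ᵇ ℂ), hm1⟩ : A) - ⟨tr y (v n), hm2⟩‖ :=
          char_norm_le hA t _
      _ = ‖tr y ((u : (Fin N → ℝ) →ᵇ ℂ) - v n)‖ := by rw [hsub]; rfl
      _ ≤ ‖(u : (Fin N → ℝ) →ᵇ ℂ) - v n‖ := norm_tr_le _ _
  have huni : TendstoUniformly (fun n y => w n y) f atTop := by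
    rw [Metric.tendstoUniformly_iff]
    intro ε hε
    filter_upwards [hnormlim.eventually (gt_mem_nhds hε)] with n hn y
    rw [dist_eq_norm]
    exact lt_of_le_of_lt (hest n y) hn
  have hcont : Continuous f :=
    huni.continuous (Eventually.of_forall fun n => (w n).continuous).frequently
  have hbound : ∀ y, ‖f y‖ ≤ ‖u‖ := by
    intro y
    calc ‖f y‖ ≤ ‖(⟨tr y (u : (Fin N → ℝ) →ᵇ ℂ), tr_mem hA y u.2⟩ : A)‖ :=
          char_norm_le hA t _
      _ = ‖tr y (u : (Fin N → ℝ) →ᵇ ℂ)‖ := rfl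
      _ ≤ ‖(u : (Fin N → ℝ) →ᵇ ℂ)‖ := norm_tr_le _ _
      _ = ‖u‖ := rfl
  set W0 : (Fin N → ℝ) →ᵇ ℂ :=
    BoundedContinuousFunction.ofNormedAddCommGroup f hcont ‖u‖ hbound with hW0
  have hWlim : Tendsto (fun n => w n) atTop (𝓝 W0) := by
    rw [tendsto_iff_norm_sub_tendsto_zero]
    refine squeeze_zero (fun n => norm_nonneg _) (fun n => ?_) hnormlim
    rw [BoundedContinuousFunction.norm_le (norm_nonneg _)]
    intro y
    rw [BoundedContinuousFunction.sub_apply]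
    have : W0 y = f y := rfl
    rw [this, norm_sub_rev]
    exact hest n y
  have hW0A : W0 ∈ A := by
    rw [← SetLike.mem_coe, hA]
    exact mem_closure_of_tendsto hWlim (Eventually.of_forall fun n => hwS n)
  exact ⟨⟨W0, hW0A⟩, fun y => rfl⟩

/-- The operator `u ↦ (y ↦ t (τ_y u))` on `A`. -/
def Tmap (t : WeakDual.characterSpace ℂ A) (u : A) : A :=
  (exists_T hA t u).choose

lemma Tmap_spec (t : WeakDual.characterSpace ℂ A) (u : A) (y : Fin N → ℝ) :
    ((Tmap hA t u : A) : (Fin N → ℝ) →ᵇ ℂ) y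
      = t ⟨tr y (u : (Fin N → ℝ) →ᵇ ℂ), tr_mem hA y u.2⟩ :=
  (exists_T hA t u).choose_spec y


lemma Tmap_add (t : WeakDual.characterSpace ℂ A) (u v : A) :
    Tmap hA t (u + v) = Tmap hA t u + Tmap hA t v := by
  apply Subtype.ext
  ext y
  rw [AddMemClass.coe_add, BoundedContinuousFunction.add_apply,
    Tmap_spec, Tmap_spec, Tmap_spec]
  have h1 : (⟨tr y ((u + v : A) : (Fin N → ℝ) →ᵇ ℂ), tr_mem hA y (u + v).2⟩ : A)
      = ⟨tr y (u : (Fin N → ℝ) →ᵇ ℂ), tr_mem hA y u.2⟩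
        + ⟨tr y (v : (Fin N → ℝ) →ᵇ ℂ), tr_mem hA y v.2⟩ := by
    apply Subtype.ext
    simp [tr_add]
  rw [h1, map_add]

lemma Tmap_smul (t : WeakDual.characterSpace ℂ A) (c : ℂ) (u : A) :
    Tmap hA t (c • u) = c • Tmap hA t u := by
  apply Subtype.ext
  ext y
  rw [SetLike.val_smul, BoundedContinuousFunction.smul_apply,
    Tmap_spec, Tmap_spec]
  have h1 : (⟨tr y ((c • u : A) : (Fin N → ℝ) →ᵇ ℂ), tr_mem hA y (c • u).2⟩ : A)
      = c • ⟨tr y (u : (Fin N → ℝ) →ᵇ ℂ), tr_mem hA y u.2⟩ := by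
    apply Subtype.ext
    simp [tr_smul]
  rw [h1, _root_.map_smul]

lemma Tmap_mul (t : WeakDual.characterSpace ℂ A) (u v : A) :
    Tmap hA t (u * v) = Tmap hA t u * Tmap hA t v := by
  apply Subtype.ext
  ext y
  rw [MulMemClass.coe_mul, BoundedContinuousFunction.mul_apply,
    Tmap_spec, Tmap_spec, Tmap_spec]
  have h1 : (⟨tr y ((u * v : A) : (Fin N → ℝ) →ᵇ ℂ), tr_mem hA y (u * v).2⟩ : A)
      = ⟨tr y (u : (Fin N → ℝ) →ᵇ ℂ), tr_mem hA y u.2⟩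
        * ⟨tr y (v : (Fin N → ℝ) →ᵇ ℂ), tr_mem hA y v.2⟩ := by
    apply Subtype.ext
    simp [tr_mul]
  rw [h1, map_mul]

lemma Tmap_one (t : WeakDual.characterSpace ℂ A) : Tmap hA t 1 = 1 := by
  apply Subtype.ext
  ext y
  rw [Tmap_spec]
  have h1 : (⟨tr y ((1 : A) : (Fin N → ℝ) →ᵇ ℂ), tr_mem hA y (1 : A).2⟩ : A) = 1 := by
    apply Subtype.ext
    simp [tr_one]
  rw [h1, map_one]
  rfl

lemma Tmap_expFun (t : WeakDual.characterSpace ℂ A) (k : Fin N → ℝ) :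
    Tmap hA t ⟨expFun k, expFun_mem hA k⟩
      = t ⟨expFun k, expFun_mem hA k⟩ • ⟨expFun k, expFun_mem hA k⟩ := by
  apply Subtype.ext
  ext y
  rw [Tmap_spec, SetLike.val_smul, BoundedContinuousFunction.smul_apply]
  have h1 : (⟨tr y (expFun k), tr_mem hA y (expFun_mem hA k)⟩ : A)
      = expFun k y • ⟨expFun k, expFun_mem hA k⟩ := by
    apply Subtype.ext
    simp [tr_expFun]
  rw [h1, _root_.map_smul]
  simp [smul_eq_mul]
  ring

lemma norm_Tmap_le (t : WeakDual.characterSpace ℂ A) (u : A) :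
    ‖Tmap hA t u‖ ≤ ‖u‖ := by
  rw [norm_coe_A]
  rw [BoundedContinuousFunction.norm_le (norm_nonneg _)]
  intro y
  rw [Tmap_spec]
  calc ‖t ⟨tr y (u : (Fin N → ℝ) →ᵇ ℂ), tr_mem hA y u.2⟩‖
      ≤ ‖(⟨tr y (u : (Fin N → ℝ) →ᵇ ℂ), tr_mem hA y u.2⟩ : A)‖ := char_norm_le hA t _
    _ = ‖tr y (u : (Fin N → ℝ) →ᵇ ℂ)‖ := rfl
    _ ≤ ‖(u : (Fin N → ℝ) →ᵇ ℂ)‖ := norm_tr_le _ _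
    _ = ‖u‖ := rfl


omit hA in
/-- Evaluation character. -/
def evalChar (y : Fin N → ℝ) : WeakDual.characterSpace ℂ A :=
  mkChar A
    { toFun := fun u => (u : (Fin N → ℝ) →ᵇ ℂ) y
      map_add' := fun u v => rfl
      map_smul' := fun c u => rfl }
    1 (fun u => by
        rw [one_mul]
        exact (u : (Fin N → ℝ) →ᵇ ℂ).norm_coe_le_norm y)
    rfl (fun u v => rfl)

omit hA in
lemma evalChar_apply (y : Fin N → ℝ) (u : A) :
    evalChar (A := A) y u = (u : (Fin N → ℝ) →ᵇ ℂ) y := rfl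

/-- Product of two characters. -/
def mulChar (s t : WeakDual.characterSpace ℂ A) : WeakDual.characterSpace ℂ A :=
  mkChar A
    { toFun := fun u => s (Tmap hA t u)
      map_add' := fun u v => by
        show s (Tmap hA t (u + v)) = s (Tmap hA t u) + s (Tmap hA t v)
        rw [Tmap_add hA, map_add]
      map_smul' := fun c u => by
        show s (Tmap hA t (c • u)) = c • s (Tmap hA t u)
        rw [Tmap_smul hA, _root_.map_smul] }
    1 (fun u => by
        rw [one_mul]
        exact (char_norm_le hA s _).trans (norm_Tmap_le hA t u))
    (by
      show s (Tmap hA t 1) = 1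
      rw [Tmap_one hA, map_one])
    (fun u v => by
      show s (Tmap hA t (u * v)) = s (Tmap hA t u) * s (Tmap hA t v)
      rw [Tmap_mul hA, map_mul])

lemma mulChar_apply (s t : WeakDual.characterSpace ℂ A) (u : A) :
    mulChar hA s t u = s (Tmap hA t u) := rfl

/-- Inverse of a character. -/
def invChar (t : WeakDual.characterSpace ℂ A) : WeakDual.characterSpace ℂ A :=
  mkChar A
    { toFun := fun u => t ⟨ng (u : (Fin N → ℝ) →ᵇ ℂ), ng_mem hA u.2⟩
      map_add' := fun u v => by
        show t ⟨ng ((u + v : A) : (Fin N → ℝ) →ᵇ ℂ), ng_mem hA (u + v).2⟩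
          = t ⟨ng ((u : A) : (Fin N → ℝ) →ᵇ ℂ), ng_mem hA u.2⟩
            + t ⟨ng ((v : A) : (Fin N → ℝ) →ᵇ ℂ), ng_mem hA v.2⟩
        have h1 : (⟨ng ((u + v : A) : (Fin N → ℝ) →ᵇ ℂ), ng_mem hA (u + v).2⟩ : A)
            = ⟨ng (u : (Fin N → ℝ) →ᵇ ℂ), ng_mem hA u.2⟩
              + ⟨ng (v : (Fin N → ℝ) →ᵇ ℂ), ng_mem hA v.2⟩ := by
          apply Subtype.ext; simp [ng_add]
        rw [h1, map_add]
      map_smul' := fun c u => by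
        show t ⟨ng ((c • u : A) : (Fin N → ℝ) →ᵇ ℂ), ng_mem hA (c • u).2⟩
          = c • t ⟨ng ((u : A) : (Fin N → ℝ) →ᵇ ℂ), ng_mem hA u.2⟩
        have h1 : (⟨ng ((c • u : A) : (Fin N → ℝ) →ᵇ ℂ), ng_mem hA (c • u).2⟩ : A)
            = c • ⟨ng (u : (Fin N → ℝ) →ᵇ ℂ), ng_mem hA u.2⟩ := by
          apply Subtype.ext; simp [ng_smul]
        rw [h1, _root_.map_smul] }
    1 (fun u => by
        rw [one_mul]
        calc ‖t ⟨ng (u : (Fin N → ℝ) →ᵇ ℂ), ng_mem hA u.2⟩‖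
            ≤ ‖(⟨ng (u : (Fin N → ℝ) →ᵇ ℂ), ng_mem hA u.2⟩ : A)‖ := char_norm_le hA t _
          _ = ‖ng (u : (Fin N → ℝ) →ᵇ ℂ)‖ := rfl
          _ ≤ ‖(u : (Fin N → ℝ) →ᵇ ℂ)‖ := norm_ng_le _
          _ = ‖u‖ := rfl)
    (by
      show t ⟨ng ((1 : A) : (Fin N → ℝ) →ᵇ ℂ), ng_mem hA (1 : A).2⟩ = 1
      have h1 : (⟨ng ((1 : A) : (Fin N → ℝ) →ᵇ ℂ), ng_mem hA (1 : A).2⟩ : A) = 1 := by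
        apply Subtype.ext; simp [ng_one]
      rw [h1, map_one])
    (fun u v => by
      show t ⟨ng ((u * v : A) : (Fin N → ℝ) →ᵇ ℂ), _⟩
        = t ⟨ng (u : (Fin N → ℝ) →ᵇ ℂ), _⟩ * t ⟨ng (v : (Fin N → ℝ) →ᵇ ℂ), _⟩
      have h1 : (⟨ng ((u * v : A) : (Fin N → ℝ) →ᵇ ℂ), ng_mem hA (u * v).2⟩ : A)
          = ⟨ng (u : (Fin N → ℝ) →ᵇ ℂ), ng_mem hA u.2⟩
            * ⟨ng (v : (Fin N → ℝ) →ᵇ ℂ), ng_mem hA v.2⟩ := by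
        apply Subtype.ext; simp [ng_mul]
      rw [h1, map_mul])

lemma invChar_apply (t : WeakDual.characterSpace ℂ A) (u : A) :
    invChar hA t u = t ⟨ng (u : (Fin N → ℝ) →ᵇ ℂ), ng_mem hA u.2⟩ := rfl

lemma evalChar_expFun (y : Fin N → ℝ) (k : Fin N → ℝ) :
    evalChar (A := A) y ⟨expFun k, expFun_mem hA k⟩ = expFun k y := rfl

lemma mulChar_expFun (s t : WeakDual.characterSpace ℂ A) (k : Fin N → ℝ) :
    mulChar hA s t ⟨expFun k, expFun_mem hA k⟩
      = s ⟨expFun k, expFun_mem hA k⟩ * t ⟨expFun k, expFun_mem hA k⟩ := by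
  rw [mulChar_apply, Tmap_expFun hA, _root_.map_smul, smul_eq_mul]
  ring

lemma invChar_expFun (t : WeakDual.characterSpace ℂ A) (k : Fin N → ℝ) :
    invChar hA t ⟨expFun k, expFun_mem hA k⟩ = t ⟨expFun (-k), expFun_mem hA (-k)⟩ := by
  rw [invChar_apply]
  congr 1
  apply Subtype.ext
  simp [ng_expFun]


lemma Tmap_sub (t : WeakDual.characterSpace ℂ A) (u v : A) :
    Tmap hA t (u - v) = Tmap hA t u - Tmap hA t v := by
  have h : u - v = u + (-1 : ℂ) • v := by rw [neg_one_smul, ← sub_eq_add_neg]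
  rw [h, Tmap_add hA, Tmap_smul hA, neg_one_smul, ← sub_eq_add_neg]

lemma continuous_mulChar_eval (u : A) :
    Continuous (fun p : WeakDual.characterSpace ℂ A × WeakDual.characterSpace ℂ A
      => p.1 (Tmap hA p.2 u)) := by
  have evalc : ∀ v : A, Continuous fun s : WeakDual.characterSpace ℂ A => s v :=
    fun v => (WeakDual.eval_continuous v).comp continuous_subtype_val
  have hspan : ∀ x, x ∈ Sp N → ∀ hx : x ∈ A,
      Continuous (fun p : WeakDual.characterSpace ℂ A × WeakDual.characterSpace ℂ A
        => p.1 (Tmap hA p.2 (⟨x, hx⟩ : A))) := by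
    intro x hxs
    induction hxs using Submodule.span_induction with
    | mem x hx =>
        intro hxA
        obtain ⟨k, rfl⟩ := hx
        have hval : ∀ p : WeakDual.characterSpace ℂ A × WeakDual.characterSpace ℂ A,
            p.1 (Tmap hA p.2 (⟨expFun k, hxA⟩ : A))
            = p.2 ⟨expFun k, expFun_mem hA k⟩ * p.1 ⟨expFun k, expFun_mem hA k⟩ := by
          intro p
          have h0 : (⟨expFun k, hxA⟩ : A) = ⟨expFun k, expFun_mem hA k⟩ := rfl
          rw [h0, Tmap_expFun hA, _root_.map_smul, smul_eq_mul]
        simp only [hval]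
        exact ((evalc _).comp continuous_snd).mul ((evalc _).comp continuous_fst)
    | zero =>
        intro hxA
        have hval : ∀ p : WeakDual.characterSpace ℂ A × WeakDual.characterSpace ℂ A,
            p.1 (Tmap hA p.2 (⟨0, hxA⟩ : A)) = 0 := by
          intro p
          have h0 : (⟨(0 : (Fin N → ℝ) →ᵇ ℂ), hxA⟩ : A) = (0 : ℂ) • (1 : A) := by
            apply Subtype.ext; simp
          rw [h0, Tmap_smul hA, zero_smul, map_zero]
        simp only [hval]
        exact continuous_const
    | add a b ha hb iha ihb =>
        intro hxA
        have haA := span_le_A hA ha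
        have hbA := span_le_A hA hb
        have hval : ∀ p : WeakDual.characterSpace ℂ A × WeakDual.characterSpace ℂ A,
            p.1 (Tmap hA p.2 (⟨a + b, hxA⟩ : A))
            = p.1 (Tmap hA p.2 ⟨a, haA⟩) + p.1 (Tmap hA p.2 ⟨b, hbA⟩) := by
          intro p
          have h0 : (⟨a + b, hxA⟩ : A) = ⟨a, haA⟩ + ⟨b, hbA⟩ := rfl
          rw [h0, Tmap_add hA, map_add]
        simp only [hval]
        exact (iha haA).add (ihb hbA)
    | smul c a ha iha =>
        intro hxA
        have haA := span_le_A hA ha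
        have hval : ∀ p : WeakDual.characterSpace ℂ A × WeakDual.characterSpace ℂ A,
            p.1 (Tmap hA p.2 (⟨c • a, hxA⟩ : A))
            = c * p.1 (Tmap hA p.2 ⟨a, haA⟩) := by
          intro p
          have h0 : (⟨c • a, hxA⟩ : A) = c • ⟨a, haA⟩ := rfl
          rw [h0, Tmap_smul hA, _root_.map_smul, smul_eq_mul]
        simp only [hval]
        exact continuous_const.mul (iha haA)
  have hu : (u : (Fin N → ℝ) →ᵇ ℂ) ∈ closure (Sp N : Set ((Fin N → ℝ) →ᵇ ℂ)) := by
    rw [← hA]; exact u.2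
  obtain ⟨v, hv, hvlim⟩ := mem_closure_iff_seq_limit.mp hu
  have hnormlim : Tendsto (fun n => ‖(u : (Fin N → ℝ) →ᵇ ℂ) - v n‖) atTop (𝓝 0) := by
    have := (tendsto_iff_norm_sub_tendsto_zero).mp hvlim
    simpa [norm_sub_rev] using this
  have huni : TendstoUniformly
      (fun n (p : WeakDual.characterSpace ℂ A × WeakDual.characterSpace ℂ A)
        => p.1 (Tmap hA p.2 ⟨v n, span_le_A hA (hv n)⟩))
      (fun p => p.1 (Tmap hA p.2 u)) atTop := by
    rw [Metric.tendstoUniformly_iff]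
    intro ε hε
    filter_upwards [hnormlim.eventually (gt_mem_nhds hε)] with n hn p
    rw [dist_eq_norm]
    have hsub : u - (⟨v n, span_le_A hA (hv n)⟩ : A)
        = ⟨(u : (Fin N → ℝ) →ᵇ ℂ) - v n, A.sub_mem u.2 (span_le_A hA (hv n))⟩ := rfl
    calc ‖p.1 (Tmap hA p.2 u) - p.1 (Tmap hA p.2 ⟨v n, span_le_A hA (hv n)⟩)‖
        = ‖p.1 (Tmap hA p.2 (u - ⟨v n, span_le_A hA (hv n)⟩))‖ := by
          rw [Tmap_sub hA, map_sub]
      _ ≤ ‖Tmap hA p.2 (u - ⟨v n, span_le_A hA (hv n)⟩)‖ := char_norm_le hA p.1 _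
      _ ≤ ‖u - (⟨v n, span_le_A hA (hv n)⟩ : A)‖ := norm_Tmap_le hA p.2 _
      _ = ‖(u : (Fin N → ℝ) →ᵇ ℂ) - v n‖ := by rw [hsub]; rfl
      _ < ε := hn
  exact huni.continuous (Eventually.of_forall fun n => hspan _ (hv n) _).frequently

/-- Density of the evaluation characters, via Gelfand duality. -/
lemma denseRange_evalChar : DenseRange (fun y => evalChar (A := A) y) := by
  have hAc : IsClosed (A : Set ((Fin N → ℝ) →ᵇ ℂ)) := isClosed_A hA
  haveI : CompleteSpace A := hAc.completeSpace_coe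
  letI : StarRing A :=
    { star := fun u => ⟨star (u : (Fin N → ℝ) →ᵇ ℂ), star_mem' hA u.2⟩
      star_involutive := fun u => Subtype.ext (star_star _)
      star_mul := fun u v => Subtype.ext (star_mul _ _)
      star_add := fun u v => Subtype.ext (star_add _ _) }
  haveI : StarModule ℂ A := ⟨fun c u => Subtype.ext (star_smul c (u : (Fin N → ℝ) →ᵇ ℂ))⟩
  haveI : CStarRing A :=
    ⟨fun x => le_of_eq
      (CStarRing.norm_star_mul_self (x := (x : (Fin N → ℝ) →ᵇ ℂ))).symm⟩
  letI : CommCStarAlgebra A :=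
    { toCompleteSpace := hAc.completeSpace_coe
      norm_mul_self_le := fun x => le_of_eq
        (CStarRing.norm_star_mul_self (x := (x : (Fin N → ℝ) →ᵇ ℂ))).symm
      mul_comm := fun u v => Subtype.ext (mul_comm (u : (Fin N → ℝ) →ᵇ ℂ) v) }
  by_contra hdr
  obtain ⟨s₀, hs₀⟩ : ∃ s₀, s₀ ∉ closure (Set.range (fun y => evalChar (A := A) y)) := by
    by_contra h
    push_neg at h
    exact hdr fun x => h x
  obtain ⟨f, hf0, hf1, -⟩ := exists_continuous_zero_one_of_isClosed
    isClosed_closure (isClosed_singleton (x := s₀))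
    (Set.disjoint_singleton_right.mpr hs₀)
  let fC : C(WeakDual.characterSpace ℂ A, ℂ) :=
    ⟨fun s => (f s : ℂ), Complex.continuous_ofReal.comp f.continuous⟩
  obtain ⟨u, hu⟩ := (gelfandTransform_bijective (A := A)).2 fC
  have hzero : ∀ y, (u : (Fin N → ℝ) →ᵇ ℂ) y = 0 := by
    intro y
    have h2 : evalChar (A := A) y u = fC (evalChar (A := A) y) := by
      rw [← hu]; rfl
    have h3 : fC (evalChar (A := A) y) = 0 := by
      have hf : f (evalChar (A := A) y) = 0 := hf0 (subset_closure ⟨y, rfl⟩)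
      simp only [fC, ContinuousMap.coe_mk, hf, Complex.ofReal_zero]
    rw [evalChar_apply] at h2
    rw [h2, h3]
  have hu0 : u = 0 := Subtype.ext (BoundedContinuousFunction.ext hzero)
  have hc0 : fC s₀ = 0 := by
    rw [← hu, hu0, map_zero]
    rfl
  have hc1 : fC s₀ = 1 := by
    have hf : f s₀ = 1 := hf1 rfl
    simp only [fC, ContinuousMap.coe_mk, hf, Complex.ofReal_one]
  rw [hc0] at hc1
  exact zero_ne_one hc1

end CharStuff

end APaux


/-- If `A = AP(ℝ^N)` is the algebra of almost periodic continuous functions (the sup-norm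
closure of the span of the exponentials `y ↦ exp(2πi k·y)`, `k ∈ ℝ^N`), then the spectrum
`Δ(A)` is a compact abelian topological group: it carries a continuous commutative group
structure with identity the evaluation character `φ_0`, for which `φ_y · φ_z = φ_{y+z}`,
and the evaluation map `y ↦ φ_y` is a continuous homomorphism with dense range. -/
theorem stmt3 {N : ℕ} (A : Subalgebra ℂ ((Fin N → ℝ) →ᵇ ℂ))
    (hA : (A : Set ((Fin N → ℝ) →ᵇ ℂ)) =
      closure ((Submodule.span ℂ (Set.range (expFun (N := N))) : Submodule ℂ _) :
        Set ((Fin N → ℝ) →ᵇ ℂ))) :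
    ∃ (φ : (Fin N → ℝ) → WeakDual.characterSpace ℂ A)
      (m : WeakDual.characterSpace ℂ A → WeakDual.characterSpace ℂ A →
        WeakDual.characterSpace ℂ A)
      (inv : WeakDual.characterSpace ℂ A → WeakDual.characterSpace ℂ A),
      (∀ (y : Fin N → ℝ) (u : A), (φ y) u = (u : (Fin N → ℝ) →ᵇ ℂ) y) ∧
      Continuous (fun p : WeakDual.characterSpace ℂ A × WeakDual.characterSpace ℂ A =>
        m p.1 p.2) ∧
      Continuous inv ∧
      (∀ a b c, m (m a b) c = m a (m b c)) ∧
      (∀ a b, m a b = m b a) ∧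
      (∀ a, m (φ 0) a = a) ∧
      (∀ a, m (inv a) a = φ 0) ∧
      (∀ y z : Fin N → ℝ, m (φ y) (φ z) = φ (y + z)) ∧
      Continuous φ ∧ DenseRange φ := by
  classical
  have hA' : (A : Set ((Fin N → ℝ) →ᵇ ℂ))
      = closure ((APaux.Sp N : Submodule ℂ _) : Set ((Fin N → ℝ) →ᵇ ℂ)) := hA
  refine ⟨fun y => APaux.evalChar (A := A) y,
    fun s t => APaux.mulChar hA' s t,
    fun t => APaux.invChar hA' t, ?_, ?_, ?_, ?_, ?_, ?_, ?_, ?_, ?_, ?_⟩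
  · intro y u; rfl
  · -- continuity of multiplication
    apply Continuous.subtype_mk
    apply WeakDual.continuous_of_continuous_eval
    intro u
    exact APaux.continuous_mulChar_eval hA' u
  · -- continuity of inversion
    apply Continuous.subtype_mk
    apply WeakDual.continuous_of_continuous_eval
    intro u
    show Continuous fun t : WeakDual.characterSpace ℂ A =>
      t (⟨APaux.ng (u : (Fin N → ℝ) →ᵇ ℂ), APaux.ng_mem hA' u.2⟩ : A)
    exact (WeakDual.eval_continuous _).comp continuous_subtype_val
  · -- associativity
    intro a b c
    apply APaux.char_ext hA'
    intro k
    rw [APaux.mulChar_expFun hA', APaux.mulChar_expFun hA', APaux.mulChar_expFun hA',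
      APaux.mulChar_expFun hA', mul_assoc]
  · -- commutativity
    intro a b
    apply APaux.char_ext hA'
    intro k
    rw [APaux.mulChar_expFun hA', APaux.mulChar_expFun hA', mul_comm]
  · -- identity
    intro a
    apply APaux.char_ext hA'
    intro k
    rw [APaux.mulChar_expFun hA', APaux.evalChar_expFun hA', APaux.expFun_apply_zero, one_mul]
  · -- inverses
    intro a
    apply APaux.char_ext hA'
    intro k
    rw [APaux.mulChar_expFun hA', APaux.invChar_expFun hA', APaux.evalChar_expFun hA',
      APaux.expFun_apply_zero, ← map_mul a]
    have h1 : (⟨expFun (-k), APaux.expFun_mem hA' (-k)⟩ : A)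
        * ⟨expFun k, APaux.expFun_mem hA' k⟩ = 1 := by
      apply Subtype.ext
      rw [MulMemClass.coe_mul, APaux.expFun_mul, neg_add_cancel, APaux.expFun_zero]
      rfl
    rw [h1, map_one]
  · -- addition formula
    intro y z
    apply APaux.char_ext hA'
    intro k
    rw [APaux.mulChar_expFun hA', APaux.evalChar_expFun hA', APaux.evalChar_expFun hA',
      APaux.evalChar_expFun hA', ← APaux.expFun_add_apply]
  · -- continuity of φ
    apply Continuous.subtype_mk
    apply WeakDual.continuous_of_continuous_eval
    intro u
    show Continuous fun y : Fin N → ℝ => (u : (Fin N → ℝ) →ᵇ ℂ) y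
    exact (u : (Fin N → ℝ) →ᵇ ℂ).continuous
  · exact APaux.denseRange_evalChar hA'
end
end

section
/- Let 1 < p < ∞ and set s = min(p − 1, 1). Then there exists a constant c > 0, depending only on p, such that for all real numbers a, b and every t ∈ ℝ with |t| ≤ 1: 0 ≤ |a + t b|^p − |a|^p − p t |a|^{p−2} a b ≤ c |t|^{1+s} (|a|^p + |b|^p), where |a|^{p−2} a is understood to equal 0 when a = 0. -/
noncomputable section

open Real Set

private lemma tangent_le {p : ℝ} (hp : 1 < p) {a : ℝ} (ha : 0 < a) (u : ℝ) :
    a ^ p + p * a ^ (p - 1) * u ≤ |a + u| ^ p := by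
  have hApos : (0:ℝ) < a ^ p := Real.rpow_pos_of_pos ha p
  have hBpos : (0:ℝ) < a ^ (p - 1) := Real.rpow_pos_of_pos ha _
  have hBA : a ^ (p - 1) * a = a ^ p := by
    rw [← Real.rpow_add_one ha.ne' (p - 1)]; norm_num
  have hz : -1 ≤ |a + u| / a - 1 := by
    have h0 : 0 ≤ |a + u| / a := div_nonneg (abs_nonneg _) ha.le
    linarith
  have hb := one_add_mul_self_le_rpow_one_add hz hp.le
  have hzz : 1 + (|a + u| / a - 1) = |a + u| / a := by ring
  rw [hzz, Real.div_rpow (abs_nonneg _) ha.le] at hb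
  have hb2 : (1 + p * (|a + u| / a - 1)) * a ^ p ≤ |a + u| ^ p :=
    (le_div_iff₀ hApos).mp hb
  have habs : a + u ≤ |a + u| := le_abs_self _
  have expand : (1 + p * (|a + u| / a - 1)) * a ^ p
      = a ^ p + p * (|a + u| * a ^ (p - 1) - a ^ p) := by
    rw [← hBA]; field_simp
  rw [expand] at hb2
  nlinarith [mul_le_mul_of_nonneg_left habs hBpos.le, hp]



private lemma pow_shift {p : ℝ} {a : ℝ} (ha : 0 < a) : a ^ (p - 2) * a = a ^ (p - 1) := by
  rw [← Real.rpow_add_one ha.ne' (p - 2)]; congr 1; ring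

private lemma lower_nonneg {p : ℝ} (hp : 1 < p) {a : ℝ} (ha : 0 ≤ a) (u : ℝ) :
    |a| ^ p + p * (|a| ^ (p - 2) * a) * u ≤ |a + u| ^ p := by
  rcases ha.eq_or_lt with h | h
  · rw [← h]
    simp [Real.zero_rpow (by linarith : p ≠ 0)]
    positivity
  · rw [abs_of_pos h, pow_shift h]
    exact tangent_le hp h u

private lemma lower {p : ℝ} (hp : 1 < p) (a u : ℝ) :
    |a| ^ p + p * (|a| ^ (p - 2) * a) * u ≤ |a + u| ^ p := by
  rcases le_total 0 a with ha | ha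
  · exact lower_nonneg hp ha u
  · have h := lower_nonneg hp (neg_nonneg.2 ha) (-u)
    rw [abs_neg] at h
    have e1 : -a + -u = -(a + u) := by ring
    rw [e1, abs_neg] at h
    have e2 : p * (|a| ^ (p - 2) * -a) * -u = p * (|a| ^ (p - 2) * a) * u := by ring
    rw [e2] at h
    exact h

private lemma base_bound {p : ℝ} (hp : 1 < p) {a x : ℝ} (ha : 0 < a)
    (hx : x ∈ Icc (a / 2) (3 * a / 2)) : x ^ (p - 2) ≤ 2 ^ p * a ^ (p - 2) := by
  obtain ⟨hx1, hx2⟩ := hx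
  have hxpos : 0 < x := lt_of_lt_of_le (by linarith) hx1
  rcases le_total p 2 with hple | hpge
  · have h1 : x ^ (p - 2) ≤ (a / 2) ^ (p - 2) :=
      Real.rpow_le_rpow_of_nonpos (by linarith) hx1 (by linarith)
    have h2 : (a / 2) ^ (p - 2) = a ^ (p - 2) / 2 ^ (p - 2) :=
      Real.div_rpow ha.le (by norm_num : (0:ℝ) ≤ 2) (p - 2)
    have h3 : a ^ (p - 2) / 2 ^ (p - 2) = 2 ^ (2 - p) * a ^ (p - 2) := by
      rw [div_eq_mul_inv, ← Real.rpow_neg (by norm_num : (0:ℝ) ≤ 2)]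
      rw [show -(p - 2) = 2 - p by ring]; ring
    have h4 : (2:ℝ) ^ (2 - p) ≤ 2 ^ p :=
      Real.rpow_le_rpow_of_exponent_le (by norm_num) (by linarith)
    have h5 : (0:ℝ) ≤ a ^ (p - 2) := (Real.rpow_pos_of_pos ha _).le
    calc x ^ (p - 2) ≤ 2 ^ (2 - p) * a ^ (p - 2) := by rw [← h3, ← h2]; exact h1
      _ ≤ 2 ^ p * a ^ (p - 2) := by nlinarith
  · have h1 : x ^ (p - 2) ≤ (2 * a) ^ (p - 2) :=
      Real.rpow_le_rpow hxpos.le (by linarith) (by linarith)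
    have h2 : (2 * a) ^ (p - 2) = 2 ^ (p - 2) * a ^ (p - 2) :=
      Real.mul_rpow (by norm_num) ha.le
    have h4 : (2:ℝ) ^ (p - 2) ≤ 2 ^ p :=
      Real.rpow_le_rpow_of_exponent_le (by norm_num) (by linarith)
    have h5 : (0:ℝ) ≤ a ^ (p - 2) := (Real.rpow_pos_of_pos ha _).le
    calc x ^ (p - 2) ≤ 2 ^ (p - 2) * a ^ (p - 2) := by rw [← h2]; exact h1
      _ ≤ 2 ^ p * a ^ (p - 2) := by nlinarith

private lemma deriv_holder {p : ℝ} (hp : 1 < p) {a u : ℝ} (ha : 0 < a) (hu : |u| ≤ a / 2) :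
    |(a + u) ^ (p - 1) - a ^ (p - 1)| ≤ (p - 1) * (2 ^ p * a ^ (p - 2)) * |u| := by
  obtain ⟨hu1, hu2⟩ := abs_le.mp hu
  have hs : Convex ℝ (Icc (a / 2) (3 * a / 2)) := convex_Icc _ _
  have hderiv : ∀ x ∈ Icc (a / 2) (3 * a / 2),
      HasDerivWithinAt (fun y : ℝ => y ^ (p - 1)) ((p - 1) * x ^ (p - 2))
        (Icc (a / 2) (3 * a / 2)) x := by
    intro x hx
    have hxne : x ≠ 0 := by
      have := hx.1; intro h; rw [h] at this; linarith
    have h := Real.hasDerivAt_rpow_const (p := p - 1) (Or.inl hxne)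
    rw [show p - 1 - 1 = p - 2 by ring] at h
    exact h.hasDerivWithinAt
  have hbound : ∀ x ∈ Icc (a / 2) (3 * a / 2),
      ‖(p - 1) * x ^ (p - 2)‖ ≤ (p - 1) * (2 ^ p * a ^ (p - 2)) := by
    intro x hx
    have hxpos : 0 < x := lt_of_lt_of_le (by linarith) hx.1
    rw [Real.norm_eq_abs, abs_of_nonneg (mul_nonneg (by linarith) (Real.rpow_nonneg hxpos.le _))]
    exact mul_le_mul_of_nonneg_left (base_bound hp ha hx) (by linarith)
  have hxs : a ∈ Icc (a / 2) (3 * a / 2) := ⟨by linarith, by linarith⟩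
  have hys : a + u ∈ Icc (a / 2) (3 * a / 2) := ⟨by linarith, by linarith⟩
  have := hs.norm_image_sub_le_of_norm_hasDerivWithin_le hderiv hbound hxs hys
  simpa using this


private lemma subA {p a u : ℝ} (hp : 1 < p) (hp2 : p ≤ 2) (ha : 0 < a) (hua : |u| ≤ a) :
    a ^ (p - 2) * u ^ 2 ≤ |u| ^ p := by
  rcases eq_or_ne u 0 with rfl | hu
  · simp [Real.zero_rpow (by linarith : p ≠ 0)]
  · have hu0 : 0 < |u| := abs_pos.2 hu
    have h1 : a ^ (p - 2) ≤ |u| ^ (p - 2) :=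
      Real.rpow_le_rpow_of_nonpos hu0 hua (by linarith)
    have h2 : |u| ^ (p - 2) * u ^ 2 = |u| ^ p := by
      rw [show u ^ 2 = |u| * |u| by rw [abs_mul_abs_self]; ring,
        show |u| ^ (p - 2) * (|u| * |u|) = |u| ^ (p - 2) * |u| * |u| by ring,
        ← Real.rpow_add_one hu0.ne' (p - 2), ← Real.rpow_add_one hu0.ne' (p - 2 + 1)]
      congr 1; ring
    calc a ^ (p - 2) * u ^ 2 ≤ |u| ^ (p - 2) * u ^ 2 :=
          mul_le_mul_of_nonneg_right h1 (sq_nonneg u)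
      _ = |u| ^ p := h2

private lemma subB {p a b : ℝ} (hp2 : 2 ≤ p) (ha : 0 < a) :
    a ^ (p - 2) * b ^ 2 ≤ a ^ p + |b| ^ p := by
  have hbp : (0:ℝ) ≤ |b| ^ p := Real.rpow_nonneg (abs_nonneg b) p
  have hap : (0:ℝ) < a ^ p := Real.rpow_pos_of_pos ha p
  rcases le_total |b| a with h | h
  · have h1 : b ^ 2 ≤ a ^ 2 := by
      rw [show b ^ 2 = |b| ^ 2 by rw [sq_abs]]
      exact pow_le_pow_left₀ (abs_nonneg b) h 2
    have h2 : a ^ (p - 2) * a ^ (2:ℕ) = a ^ p := by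
      rw [show a ^ (2:ℕ) = a * a by ring,
        show a ^ (p - 2) * (a * a) = a ^ (p - 2) * a * a by ring,
        ← Real.rpow_add_one ha.ne' (p - 2), ← Real.rpow_add_one ha.ne' (p - 2 + 1)]
      congr 1; ring
    have h3 : a ^ (p - 2) * b ^ 2 ≤ a ^ (p - 2) * a ^ 2 :=
      mul_le_mul_of_nonneg_left h1 (Real.rpow_nonneg ha.le _)
    calc a ^ (p - 2) * b ^ 2 ≤ a ^ (p - 2) * a ^ 2 := h3
      _ = a ^ p := h2
      _ ≤ a ^ p + |b| ^ p := by linarith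
  · rcases eq_or_ne b 0 with rfl | hb
    · have : a ≤ 0 := by simpa using h
      linarith
    · have hb0 : 0 < |b| := abs_pos.2 hb
      have h1 : a ^ (p - 2) ≤ |b| ^ (p - 2) :=
        Real.rpow_le_rpow ha.le h (by linarith)
      have h2 : |b| ^ (p - 2) * b ^ 2 = |b| ^ p := by
        rw [show b ^ 2 = |b| * |b| by rw [abs_mul_abs_self]; ring,
          show |b| ^ (p - 2) * (|b| * |b|) = |b| ^ (p - 2) * |b| * |b| by ring,
          ← Real.rpow_add_one hb0.ne' (p - 2), ← Real.rpow_add_one hb0.ne' (p - 2 + 1)]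
        congr 1; ring
      calc a ^ (p - 2) * b ^ 2 ≤ |b| ^ (p - 2) * b ^ 2 :=
            mul_le_mul_of_nonneg_right h1 (sq_nonneg b)
        _ = |b| ^ p := h2
        _ ≤ a ^ p + |b| ^ p := by linarith



private lemma case1 {p : ℝ} (hp : 1 < p) {a u : ℝ} (ha : 0 < a) (hu : |u| ≤ a / 2) :
    |a + u| ^ p - a ^ p - p * a ^ (p - 1) * u ≤ p * (p - 1) * 2 ^ p * a ^ (p - 2) * u ^ 2 := by
  obtain ⟨hu1, hu2⟩ := abs_le.mp hu
  have hau : 0 < a + u := by linarith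
  have h1 := tangent_le hp hau (-u)
  rw [show a + u + -u = a by ring, abs_of_pos ha] at h1
  rw [abs_of_pos hau]
  have h2 := deriv_holder hp ha hu
  have h3 : ((a + u) ^ (p - 1) - a ^ (p - 1)) * u
      ≤ |(a + u) ^ (p - 1) - a ^ (p - 1)| * |u| := by
    calc ((a + u) ^ (p - 1) - a ^ (p - 1)) * u
        ≤ |((a + u) ^ (p - 1) - a ^ (p - 1)) * u| := le_abs_self _
      _ = _ := abs_mul _ _
  have h5 : p * (((a + u) ^ (p - 1) - a ^ (p - 1)) * u)
      ≤ p * (|(a + u) ^ (p - 1) - a ^ (p - 1)| * |u|) :=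
    mul_le_mul_of_nonneg_left h3 (by linarith)
  have h6 : p * (|(a + u) ^ (p - 1) - a ^ (p - 1)| * |u|)
      ≤ p * ((p - 1) * (2 ^ p * a ^ (p - 2)) * |u| * |u|) :=
    mul_le_mul_of_nonneg_left (mul_le_mul_of_nonneg_right h2 (abs_nonneg u)) (by linarith)
  have h7 : p * ((p - 1) * (2 ^ p * a ^ (p - 2)) * |u| * |u|)
      = p * (p - 1) * 2 ^ p * a ^ (p - 2) * u ^ 2 := by
    rw [show (p - 1) * (2 ^ p * a ^ (p - 2)) * |u| * |u|
        = (p - 1) * (2 ^ p * a ^ (p - 2)) * (|u| * |u|) by ring, abs_mul_abs_self]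
    ring
  nlinarith [h1, h5, h6]


private lemma tpow {p : ℝ} (hp : 1 < p) {t : ℝ} (ht : |t| ≤ 1) :
    |t| ^ p ≤ |t| ^ (1 + min (p - 1) 1) := by
  have hm : 1 + min (p - 1) 1 ≤ p := by
    have := min_le_left (p - 1) 1; linarith
  have hm0 : 0 < 1 + min (p - 1) 1 := by
    have := lt_min (by linarith : (0:ℝ) < p - 1) one_pos; linarith
  rcases eq_or_ne t 0 with rfl | ht0
  · simp [Real.zero_rpow (by linarith : p ≠ 0), Real.zero_rpow hm0.ne']
  · exact Real.rpow_le_rpow_of_exponent_ge (abs_pos.2 ht0) ht hm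

private lemma upper_nonneg {p : ℝ} (hp : 1 < p) {a : ℝ} (ha : 0 ≤ a) (b t : ℝ) (ht : |t| ≤ 1) :
    |a + t * b| ^ p - |a| ^ p - p * t * (|a| ^ (p - 2) * a) * b ≤
      (3 ^ p + p * 2 ^ p + p * (p - 1) * 2 ^ p) * |t| ^ (1 + min (p - 1) 1)
        * (|a| ^ p + |b| ^ p) := by
  have hp0 : (0:ℝ) ≤ p := by linarith
  have hp10 : (0:ℝ) ≤ p - 1 := by linarith
  have h2p : (0:ℝ) < 2 ^ p := Real.rpow_pos_of_pos (by norm_num) p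
  have h3p : (1:ℝ) ≤ 3 ^ p := Real.one_le_rpow (by norm_num) (by linarith)
  have h3p0 : (0:ℝ) ≤ 3 ^ p := by linarith
  have hbp : (0:ℝ) ≤ |b| ^ p := Real.rpow_nonneg (abs_nonneg b) p
  have hT0 : (0:ℝ) ≤ |t| ^ (1 + min (p - 1) 1) := Real.rpow_nonneg (abs_nonneg t) _
  have htp : |t| ^ p ≤ |t| ^ (1 + min (p - 1) 1) := tpow hp ht
  have htp0 : (0:ℝ) ≤ |t| ^ p := Real.rpow_nonneg (abs_nonneg t) p
  have htbp : |t * b| ^ p = |t| ^ p * |b| ^ p := by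
    rw [abs_mul, Real.mul_rpow (abs_nonneg t) (abs_nonneg b)]
  have hC1 : (1:ℝ) ≤ 3 ^ p + p * 2 ^ p + p * (p - 1) * 2 ^ p := by
    nlinarith [mul_nonneg hp0 h2p.le, mul_nonneg (mul_nonneg hp0 hp10) h2p.le]
  rcases ha.eq_or_lt with h | h
  · -- a = 0
    rw [← h]
    simp only [abs_zero, Real.zero_rpow (by linarith : p ≠ 0), mul_zero, zero_mul, sub_zero,
      zero_add, zero_mul, mul_zero]
    rw [htbp]
    have h1 : |t| ^ p * |b| ^ p ≤ |t| ^ (1 + min (p - 1) 1) * |b| ^ p :=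
      mul_le_mul_of_nonneg_right htp hbp
    have h2 := le_mul_of_one_le_left (mul_nonneg hT0 hbp) hC1
    linarith [h1, h2]
  · -- a > 0
    rw [abs_of_pos h, pow_shift h]
    have hap : (0:ℝ) < a ^ p := Real.rpow_pos_of_pos h p
    have hap2 : (0:ℝ) ≤ a ^ (p - 2) := Real.rpow_nonneg h.le _
    rcases le_or_gt |t * b| (a / 2) with hc | hc
    · -- perturbative case
      have hkey := case1 hp h hc
      have hgoal1 : |a + t * b| ^ p - a ^ p - p * t * (a ^ (p - 1)) * b ≤
          p * (p - 1) * 2 ^ p * (a ^ (p - 2) * (t * b) ^ 2) := by nlinarith [hkey]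
      rcases le_total p 2 with hp2 | hp2
      · -- 1 < p ≤ 2
        have hmin : min (p - 1) 1 = p - 1 := min_eq_left (by linarith)
        have hT : |t| ^ (1 + min (p - 1) 1) = |t| ^ p := by
          rw [hmin, show 1 + (p - 1) = p by ring]
        rw [hT]
        have hA := subA hp hp2 h (le_trans hc (by linarith))
        rw [htbp] at hA
        have hstep : p * (p - 1) * 2 ^ p * (a ^ (p - 2) * (t * b) ^ 2) ≤
            p * (p - 1) * 2 ^ p * (|t| ^ p * |b| ^ p) :=
          mul_le_mul_of_nonneg_left hA
            (mul_nonneg (mul_nonneg hp0 hp10) h2p.le)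
        have hXY : (0:ℝ) ≤ |t| ^ p * |b| ^ p := mul_nonneg htp0 hbp
        have hXA : (0:ℝ) ≤ |t| ^ p * a ^ p := mul_nonneg htp0 hap.le
        linarith [hgoal1, hstep, mul_nonneg h3p0 hXY,
          mul_nonneg (mul_nonneg hp0 h2p.le) hXY, mul_nonneg h3p0 hXA,
          mul_nonneg (mul_nonneg hp0 h2p.le) hXA,
          mul_nonneg (mul_nonneg (mul_nonneg hp0 hp10) h2p.le) hXA]
      · -- 2 ≤ p
        have hmin : min (p - 1) 1 = 1 := min_eq_right (by linarith)
        have hT : |t| ^ (1 + min (p - 1) 1) = t ^ 2 := by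
          rw [hmin, show (1:ℝ) + 1 = ((2:ℕ):ℝ) by norm_num, Real.rpow_natCast, sq_abs]
        rw [hT]
        have hB := subB (b := b) hp2 h
        have h8 : (0:ℝ) ≤ p * (p - 1) * 2 ^ p * t ^ 2 :=
          mul_nonneg (mul_nonneg (mul_nonneg hp0 hp10) h2p.le) (sq_nonneg t)
        have h9 := mul_le_mul_of_nonneg_left hB h8
        have h10 : (0:ℝ) ≤ (3 ^ p + p * 2 ^ p) * (t ^ 2 * (a ^ p + |b| ^ p)) := by
          apply mul_nonneg (by nlinarith [mul_nonneg hp0 h2p.le])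
          exact mul_nonneg (sq_nonneg t) (by linarith)
        linarith [h9, h10, hgoal1]
    · -- large case
      have hu0 : 0 < |t * b| := lt_of_le_of_lt (by positivity) hc
      have h1 : |a + t * b| ≤ 3 * |t * b| := by
        have := abs_add_le a (t * b)
        rw [abs_of_pos h] at this
        linarith
      have h2 : |a + t * b| ^ p ≤ (3 * |t * b|) ^ p :=
        Real.rpow_le_rpow (abs_nonneg _) h1 (by linarith)
      have h2' : (3 * |t * b|) ^ p = 3 ^ p * |t * b| ^ p :=
        Real.mul_rpow (by norm_num) (abs_nonneg _)
      have h3 : a ^ (p - 1) ≤ (2 * |t * b|) ^ (p - 1) :=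
        Real.rpow_le_rpow h.le (by linarith) (by linarith)
      have h3' : (2 * |t * b|) ^ (p - 1) = 2 ^ (p - 1) * |t * b| ^ (p - 1) :=
        Real.mul_rpow (by norm_num) (abs_nonneg _)
      rw [h3'] at h3
      have h5 : |t * b| ^ (p - 1) * |t * b| = |t * b| ^ p := by
        rw [← Real.rpow_add_one hu0.ne' (p - 1)]; congr 1; ring
      have h6 : (2:ℝ) ^ (p - 1) ≤ 2 ^ p :=
        Real.rpow_le_rpow_of_exponent_le (by norm_num) (by linarith)
      have hup : (0:ℝ) ≤ |t * b| ^ p := Real.rpow_nonneg (abs_nonneg _) p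
      have hup1 : (0:ℝ) ≤ |t * b| ^ (p - 1) := Real.rpow_nonneg (abs_nonneg _) _
      have hB1 : (0:ℝ) ≤ a ^ (p - 1) := Real.rpow_nonneg h.le _
      have h4 : -(p * a ^ (p - 1) * |t * b|) ≤ p * t * a ^ (p - 1) * b := by
        have h41 := neg_abs_le (t * b)
        linarith [mul_le_mul_of_nonneg_left h41 (mul_nonneg hp0 hB1)]
      have hA : p * a ^ (p - 1) * |t * b|
          ≤ p * (2 ^ (p - 1) * |t * b| ^ (p - 1)) * |t * b| :=
        by linarith [mul_le_mul_of_nonneg_left h3 (mul_nonneg hp0 (abs_nonneg (t * b)))]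
      have hB : p * (2 ^ (p - 1) * |t * b| ^ (p - 1)) * |t * b| ≤ p * 2 ^ p * |t * b| ^ p := by
        rw [show p * (2 ^ (p - 1) * |t * b| ^ (p - 1)) * |t * b|
          = p * 2 ^ (p - 1) * (|t * b| ^ (p - 1) * |t * b|) by ring, h5]
        linarith [mul_le_mul_of_nonneg_right h6 (mul_nonneg hp0 hup)]
      have hchain : |a + t * b| ^ p - a ^ p - p * t * a ^ (p - 1) * b ≤
          (3 ^ p + p * 2 ^ p) * |t * b| ^ p := by
        linarith [h2, h2', hA, hB, h4, hap]
      have e1 : |t| ^ p * |b| ^ p ≤ |t| ^ (1 + min (p - 1) 1) * (a ^ p + |b| ^ p) := by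
        calc |t| ^ p * |b| ^ p ≤ |t| ^ (1 + min (p - 1) 1) * |b| ^ p :=
              mul_le_mul_of_nonneg_right htp hbp
          _ ≤ |t| ^ (1 + min (p - 1) 1) * (a ^ p + |b| ^ p) :=
              mul_le_mul_of_nonneg_left (by linarith) hT0
      have hfin : (3 ^ p + p * 2 ^ p) * |t * b| ^ p ≤
          (3 ^ p + p * 2 ^ p + p * (p - 1) * 2 ^ p) * |t| ^ (1 + min (p - 1) 1)
            * (a ^ p + |b| ^ p) := by
        rw [htbp]
        have e2 := mul_le_mul_of_nonneg_left e1
          (by nlinarith [mul_nonneg hp0 h2p.le] : (0:ℝ) ≤ 3 ^ p + p * 2 ^ p)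
        have e3 : (0:ℝ) ≤ p * (p - 1) * 2 ^ p *
            (|t| ^ (1 + min (p - 1) 1) * (a ^ p + |b| ^ p)) :=
          mul_nonneg (mul_nonneg (mul_nonneg hp0 hp10) h2p.le)
            (mul_nonneg hT0 (by linarith))
        linarith [e2, e3]
      linarith [hchain, hfin]

/-- For `1 < p < ∞` and `s = min(p−1, 1)`, there is a constant `c > 0` depending only on `p`
such that for all reals `a, b` and all `|t| ≤ 1`:
`0 ≤ |a + tb|^p − |a|^p − p t |a|^{p−2} a b ≤ c |t|^{1+s} (|a|^p + |b|^p)`. -/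
theorem stmt8 (p : ℝ) (hp : 1 < p) :
    ∃ c : ℝ, 0 < c ∧ ∀ a b t : ℝ, |t| ≤ 1 →
      0 ≤ |a + t * b| ^ p - |a| ^ p - p * t * (|a| ^ (p - 2) * a) * b ∧
      |a + t * b| ^ p - |a| ^ p - p * t * (|a| ^ (p - 2) * a) * b ≤
        c * |t| ^ (1 + min (p - 1) 1) * (|a| ^ p + |b| ^ p) := by
  refine ⟨3 ^ p + p * 2 ^ p + p * (p - 1) * 2 ^ p, ?_, ?_⟩
  · have h2p : (0:ℝ) < 2 ^ p := Real.rpow_pos_of_pos (by norm_num) p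
    have h3p : (1:ℝ) ≤ 3 ^ p := Real.one_le_rpow (by norm_num) (by linarith)
    nlinarith [mul_nonneg (by linarith : (0:ℝ) ≤ p) h2p.le,
      mul_nonneg (mul_nonneg (by linarith : (0:ℝ) ≤ p) (by linarith : (0:ℝ) ≤ p - 1)) h2p.le]
  · intro a b t ht
    constructor
    · linarith [lower hp a (t * b)]
    · rcases le_total 0 a with ha | ha
      · exact upper_nonneg hp ha b t ht
      · have h := upper_nonneg hp (neg_nonneg.2 ha) (-b) t ht
        rw [show -a + t * -b = -(a + t * b) by ring, abs_neg, abs_neg, abs_neg] at h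
        linarith [h]
end
end

section
/- Let (Y, 𝔐, μ) be a σ-finite measure space, let F₁ and F₂ be separable Banach spaces, and let 1 ≤ p, r < ∞. Let g : Y × F₁ → F₂ be a Carathéodory mapping: for every v ∈ F₁ the map y ↦ g(y, v) is strongly μ-measurable, and for μ-almost every y ∈ Y the map v ↦ g(y, v) is continuous. Assume that for every u ∈ L^p(Y, μ; F₁) the function y ↦ g(y, u(y)) belongs to L^r(Y, μ; F₂). Then the superposition (Nemytskii) operator G : L^p(Y, μ; F₁) → L^r(Y, μ; F₂), G(u)(y) = g(y, u(y)), is continuous for the norm topologies. -/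
open MeasureTheory Filter Set Topology
open scoped ENNReal

noncomputable section
set_option linter.unusedSectionVars false
set_option linter.unusedVariables false
set_option maxHeartbeats 1000000

namespace NemAux


variable {Y : Type*} [MeasurableSpace Y] {μ : Measure Y}
variable {F₁ F₂ : Type*} [NormedAddCommGroup F₁] [NormedAddCommGroup F₂]

/-- The "glued" function: equals `w k` on `E k` and `u` elsewhere. -/
def glue (E : ℕ → Set Y) (u : Y → F₁) (w : ℕ → Y → F₁) : Y → F₁ :=
  fun y => u y + ∑' k, (E k).indicator (fun z => w k z - u z) y

lemma glue_summable (E : ℕ → Set Y) (u : Y → F₁) (w : ℕ → Y → F₁)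
    (hd : Pairwise (Function.onFun Disjoint E)) (y : Y) :
    Summable (fun k => (E k).indicator (fun z => w k z - u z) y) := by
  by_cases h : ∃ k, y ∈ E k
  · obtain ⟨k, hk⟩ := h
    apply summable_of_ne_finset_zero (s := {k})
    intro j hj
    simp only [Finset.mem_singleton] at hj
    have : y ∉ E j := fun hy => (hd hj).le_bot ⟨hy, hk⟩
    simp [Set.indicator_of_notMem this]
  · apply summable_of_ne_finset_zero (s := ∅)
    intro j _
    have : y ∉ E j := fun hy => h ⟨j, hy⟩
    simp [Set.indicator_of_notMem this]

lemma glue_eq_on (E : ℕ → Set Y) (u : Y → F₁) (w : ℕ → Y → F₁)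
    (hd : Pairwise (Function.onFun Disjoint E)) {k : ℕ} {y : Y} (hy : y ∈ E k) :
    glue E u w y = w k y := by
  have h : (∑' j, (E j).indicator (fun z => w j z - u z) y) = w k y - u y := by
    rw [tsum_eq_single k]
    · simp [Set.indicator_of_mem hy]
    · intro j hj
      have : y ∉ E j := fun hy' => (hd hj).le_bot ⟨hy', hy⟩
      simp [Set.indicator_of_notMem this]
  simp [glue, h]

lemma glue_eq_off (E : ℕ → Set Y) (u : Y → F₁) (w : ℕ → Y → F₁)
    {y : Y} (hy : y ∉ ⋃ k, E k) :
    glue E u w y = u y := by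
  have h : (∑' j, (E j).indicator (fun z => w j z - u z) y) = 0 := by
    rw [tsum_eq_single 0] <;> intros <;>
      simp_all [Set.indicator_of_notMem, fun j => (fun hy' => hy (Set.mem_iUnion.2 ⟨j, hy'⟩) : y ∉ E j)]
  simp [glue, h]

lemma glue_stronglyMeasurable (E : ℕ → Set Y) (u : Y → F₁) (w : ℕ → Y → F₁)
    (hE : ∀ k, MeasurableSet (E k)) (hd : Pairwise (Function.onFun Disjoint E))
    (hum : StronglyMeasurable u) (hwm : ∀ k, StronglyMeasurable (w k)) :
    StronglyMeasurable (glue E u w) := by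
  have hterm : ∀ k, StronglyMeasurable
      (fun y => (E k).indicator (fun z => w k z - u z) y) := fun k =>
    ((hwm k).sub hum).indicator (hE k)
  have hpart : ∀ n, StronglyMeasurable
      (fun y => u y + ∑ k ∈ Finset.range n, (E k).indicator (fun z => w k z - u z) y) := by
    intro n
    exact hum.add (Finset.stronglyMeasurable_fun_sum _ fun k _ => hterm k)
  apply stronglyMeasurable_of_tendsto (f := fun n y =>
    u y + ∑ k ∈ Finset.range n, (E k).indicator (fun z => w k z - u z) y) atTop hpart
  rw [tendsto_pi_nhds]
  intro y
  exact tendsto_const_nhds.add ((glue_summable E u w hd y).hasSum.tendsto_sum_nat)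


/-- A function vanishing off a disjoint union has lintegral the sum over the pieces. -/
lemma lintegral_eq_tsum_of_disjoint {E : ℕ → Set Y} (hE : ∀ k, MeasurableSet (E k))
    (hd : Pairwise (Function.onFun Disjoint E)) {f : Y → ℝ≥0∞}
    (hf0 : ∀ y, y ∉ (⋃ k, E k) → f y = 0) :
    ∫⁻ y, f y ∂μ = ∑' k, ∫⁻ y in E k, f y ∂μ := by
  rw [← lintegral_iUnion hE hd f]
  have : ∀ y, f y = (⋃ k, E k).indicator f y := by
    intro y
    by_cases hy : y ∈ ⋃ k, E k
    · rw [Set.indicator_of_mem hy]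
    · rw [Set.indicator_of_notMem hy, hf0 y hy]
  calc ∫⁻ y, f y ∂μ = ∫⁻ y, (⋃ k, E k).indicator f y ∂μ := by
        exact lintegral_congr this
    _ = ∫⁻ y in ⋃ k, E k, f y ∂μ := lintegral_indicator (MeasurableSet.iUnion hE) f

lemma glue_memLp {p : ℝ≥0∞} (hp1 : 1 ≤ p) (hp2 : p ≠ ∞)
    {E : ℕ → Set Y} (hE : ∀ k, MeasurableSet (E k)) (hd : Pairwise (Function.onFun Disjoint E))
    {u : Y → F₁} (hu : MemLp u p μ) (hum : StronglyMeasurable u)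
    {w : ℕ → Y → F₁} (hwm : ∀ k, StronglyMeasurable (w k))
    (hsum : ∑' k, ∫⁻ y in E k, (‖w k y - u y‖₊ : ℝ≥0∞) ^ p.toReal ∂μ ≠ ∞) :
    MemLp (glue E u w) p μ := by
  have hp0 : p ≠ 0 := by positivity
  have hgm : StronglyMeasurable (glue E u w) :=
    glue_stronglyMeasurable E u w hE hd hum hwm
  have hdiff : MemLp (fun y => glue E u w y - u y) p μ := by
    refine ⟨(hgm.sub hum).aestronglyMeasurable, ?_⟩
    rw [eLpNorm_eq_lintegral_rpow_enorm_toReal hp0 hp2]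
    have hint : ∫⁻ y, (‖glue E u w y - u y‖₊ : ℝ≥0∞) ^ p.toReal ∂μ
        = ∑' k, ∫⁻ y in E k, (‖glue E u w y - u y‖₊ : ℝ≥0∞) ^ p.toReal ∂μ := by
      apply lintegral_eq_tsum_of_disjoint hE hd
      intro y hy
      rw [glue_eq_off E u w hy]
      simp [ENNReal.zero_rpow_of_pos (ENNReal.toReal_pos hp0 hp2)]
    have hcongr : ∀ k, ∫⁻ y in E k, (‖glue E u w y - u y‖₊ : ℝ≥0∞) ^ p.toReal ∂μ
        = ∫⁻ y in E k, (‖w k y - u y‖₊ : ℝ≥0∞) ^ p.toReal ∂μ := by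
      intro k
      apply setLIntegral_congr_fun (hE k)
      exact fun y hy => by rw [glue_eq_on E u w hd hy]
    simp only [enorm_eq_nnnorm]; rw [hint]
    simp_rw [hcongr]
    exact ENNReal.rpow_lt_top_of_nonneg (by positivity) (by simpa using hsum)
  have : glue E u w = fun y => u y + (glue E u w y - u y) := by
    funext y; abel
  rw [this]
  exact hu.add hdiff

/-- The key contradiction lemma: there is no sequence of disjoint sets each carrying
`g`-mass at least `c > 0` along `w k`, with summable `p`-masses of `w k - u`. -/
lemma no_glue {p r : ℝ≥0∞} (hp1 : 1 ≤ p) (hp2 : p ≠ ∞) (hr1 : 1 ≤ r) (hr2 : r ≠ ∞)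
    {g : Y → F₁ → F₂}
    (hg : ∀ v : Y → F₁, MemLp v p μ → MemLp (fun y => g y (v y)) r μ)
    {E : ℕ → Set Y} (hE : ∀ k, MeasurableSet (E k)) (hd : Pairwise (Function.onFun Disjoint E))
    {u : Y → F₁} (hu : MemLp u p μ) (hum : StronglyMeasurable u)
    {w : ℕ → Y → F₁} (hwm : ∀ k, StronglyMeasurable (w k))
    (hsum : ∑' k, ∫⁻ y in E k, (‖w k y - u y‖₊ : ℝ≥0∞) ^ p.toReal ∂μ ≠ ∞)
    {c : ℝ≥0∞} (hc : c ≠ 0)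
    (hlb : ∀ k, c ≤ ∫⁻ y in E k, (‖g y (w k y)‖₊ : ℝ≥0∞) ^ r.toReal ∂μ) : False := by
  have hr0 : r ≠ 0 := by positivity
  have hV : MemLp (glue E u w) p μ := glue_memLp hp1 hp2 hE hd hu hum hwm hsum
  have hgV : MemLp (fun y => g y (glue E u w y)) r μ := hg _ hV
  have hfin : ∫⁻ y, (‖g y (glue E u w y)‖₊ : ℝ≥0∞) ^ r.toReal ∂μ < ∞ := by
    refine (eLpNorm_lt_top_iff_lintegral_rpow_enorm_lt_top (f := fun y => g y (glue E u w y)) (μ := μ) hr0 hr2).1 ?_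
    exact hgV.2
  have hge : ∑' k, ∫⁻ y in E k, (‖g y (glue E u w y)‖₊ : ℝ≥0∞) ^ r.toReal ∂μ
      ≤ ∫⁻ y, (‖g y (glue E u w y)‖₊ : ℝ≥0∞) ^ r.toReal ∂μ := by
    rw [← lintegral_iUnion hE hd]
    exact setLIntegral_le_lintegral _ _
  have hcongr : ∀ k, ∫⁻ y in E k, (‖g y (glue E u w y)‖₊ : ℝ≥0∞) ^ r.toReal ∂μ
      = ∫⁻ y in E k, (‖g y (w k y)‖₊ : ℝ≥0∞) ^ r.toReal ∂μ := by
    intro k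
    apply setLIntegral_congr_fun (hE k)
    exact fun y hy => by rw [glue_eq_on E u w hd hy]
  have htop : (∑' k, ∫⁻ y in E k, (‖g y (glue E u w y)‖₊ : ℝ≥0∞) ^ r.toReal ∂μ) = ∞ := by
    simp_rw [hcongr]
    refine top_unique ?_
    calc (∞ : ℝ≥0∞) = ∑' _ : ℕ, c := (ENNReal.tsum_const_eq_top_of_ne_zero hc).symm
      _ ≤ _ := ENNReal.tsum_le_tsum hlb
  rw [htop] at hge
  exact absurd (top_le_iff.mp hge) hfin.ne


/-- Convert an `eLpNorm` lower bound on an indicator to a set-lintegral lower bound. -/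
lemma lb_conv {r : ℝ≥0∞} (hr0 : r ≠ 0) (hr2 : r ≠ ∞) {f : Y → F₂} {s : Set Y}
    (hs : MeasurableSet s) {a : ℝ≥0∞} (ha : a ≤ eLpNorm (s.indicator f) r μ) :
    a ^ r.toReal ≤ ∫⁻ y in s, (‖f y‖₊ : ℝ≥0∞) ^ r.toReal ∂μ := by
  rw [eLpNorm_indicator_eq_eLpNorm_restrict hs, eLpNorm_eq_lintegral_rpow_enorm_toReal hr0 hr2] at ha
  calc a ^ r.toReal
      ≤ ((∫⁻ y in s, (‖f y‖₊ : ℝ≥0∞) ^ r.toReal ∂μ) ^ (1 / r.toReal)) ^ r.toReal :=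
        ENNReal.rpow_le_rpow ha ENNReal.toReal_nonneg
    _ = ∫⁻ y in s, (‖f y‖₊ : ℝ≥0∞) ^ r.toReal ∂μ := by
        rw [← ENNReal.rpow_mul, one_div,
          inv_mul_cancel₀ (ENNReal.toReal_ne_zero.2 ⟨hr0, hr2⟩), ENNReal.rpow_one]

/-- Summability of the `p`-masses along a strictly monotone subsequence with fast decay. -/
lemma sum_bound {p : ℝ≥0∞} (hp0 : p ≠ 0) (hp2 : p ≠ ∞) {u : Y → F₁} {v : ℕ → Y → F₁}
    (hfast : ∀ k, eLpNorm (v k - u) p μ ≤ 2⁻¹ ^ k) {E : ℕ → Set Y} {i : ℕ → ℕ}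
    (hi : StrictMono i) :
    ∑' k, ∫⁻ y in E k, (‖v (i k) y - u y‖₊ : ℝ≥0∞) ^ p.toReal ∂μ ≠ ∞ := by
  have ht : 0 < p.toReal := ENNReal.toReal_pos hp0 hp2
  set q : ℝ≥0∞ := (2 : ℝ≥0∞)⁻¹ ^ p.toReal with hqdef
  have hq1 : q < 1 := ENNReal.rpow_lt_one (by norm_num) ht
  have key : ∀ k, ∫⁻ y in E k, (‖v (i k) y - u y‖₊ : ℝ≥0∞) ^ p.toReal ∂μ ≤ q ^ k := by
    intro k
    have e1 : ∫⁻ y, (‖v (i k) y - u y‖₊ : ℝ≥0∞) ^ p.toReal ∂μ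
        = eLpNorm (v (i k) - u) p μ ^ p.toReal := by
      rw [eLpNorm_eq_lintegral_rpow_enorm_toReal hp0 hp2, ← ENNReal.rpow_mul, one_div,
        inv_mul_cancel₀ (ENNReal.toReal_ne_zero.2 ⟨hp0, hp2⟩), ENNReal.rpow_one]
      simp_rw [Pi.sub_apply, enorm_eq_nnnorm]
    calc ∫⁻ y in E k, (‖v (i k) y - u y‖₊ : ℝ≥0∞) ^ p.toReal ∂μ
        ≤ ∫⁻ y, (‖v (i k) y - u y‖₊ : ℝ≥0∞) ^ p.toReal ∂μ := setLIntegral_le_lintegral _ _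
      _ = eLpNorm (v (i k) - u) p μ ^ p.toReal := e1
      _ ≤ ((2 : ℝ≥0∞)⁻¹ ^ (i k)) ^ p.toReal :=
          ENNReal.rpow_le_rpow (hfast (i k)) ENNReal.toReal_nonneg
      _ ≤ ((2 : ℝ≥0∞)⁻¹ ^ k) ^ p.toReal := by
          refine ENNReal.rpow_le_rpow ?_ ENNReal.toReal_nonneg
          exact pow_le_pow_of_le_one zero_le (by norm_num) (hi.le_apply)
      _ = q ^ k := by
          rw [← ENNReal.rpow_natCast ((2 : ℝ≥0∞)⁻¹) k, ← ENNReal.rpow_mul, mul_comm,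
            ENNReal.rpow_mul, ENNReal.rpow_natCast]
  refine ne_top_of_le_ne_top ?_ (ENNReal.tsum_le_tsum key)
  rw [ENNReal.tsum_geometric]
  refine ENNReal.inv_ne_top.2 ?_
  rw [ne_eq, tsub_eq_zero_iff_le]
  exact fun h => absurd (lt_of_lt_of_le hq1 h) (lt_irrefl _)

end NemAux


namespace NemAux2

variable {Y : Type*} [MeasurableSpace Y] {μ : Measure Y}
variable {F₁ F₂ : Type*} [NormedAddCommGroup F₁] [NormedAddCommGroup F₂]

open NemAux


variable {Y : Type*} [MeasurableSpace Y] {μ : Measure Y}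
variable {F₁ F₂ : Type*} [NormedAddCommGroup F₁] [NormedAddCommGroup F₂]

open NemAux

lemma nem_unifIntegrable {p r : ℝ≥0∞} (hp1 : 1 ≤ p) (hp2 : p ≠ ∞) (hr1 : 1 ≤ r) (hr2 : r ≠ ∞)
    {g : Y → F₁ → F₂}
    (hg : ∀ v : Y → F₁, MemLp v p μ → MemLp (fun y => g y (v y)) r μ)
    {u : Y → F₁} (hu : MemLp u p μ) (hum : StronglyMeasurable u)
    {v : ℕ → Y → F₁} (hv : ∀ k, MemLp (v k) p μ) (hvm : ∀ k, StronglyMeasurable (v k))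
    (hfast : ∀ k, eLpNorm (v k - u) p μ ≤ 2⁻¹ ^ k) :
    UnifIntegrable (fun k y => g y (v k y)) r μ := by
  have hp0 : p ≠ 0 := by positivity
  have hr0 : r ≠ 0 := by positivity
  by_contra hcon
  rw [UnifIntegrable] at hcon
  push_neg at hcon
  obtain ⟨ε, hε, H⟩ := hcon
  -- absolute continuity moduli for the single functions
  have hAC : ∀ j : ℕ, ∃ δ : ℝ, 0 < δ ∧ ∀ s, MeasurableSet s → μ s ≤ ENNReal.ofReal δ →
      eLpNorm (s.indicator (fun y => g y (v j y))) r μ ≤ ENNReal.ofReal (ε / 2) := by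
    intro j
    obtain ⟨δ, hδ, hh⟩ := (hg _ (hv j)).eLpNorm_indicator_le hr1 hr2 (half_pos hε)
    exact ⟨δ, hδ, hh⟩
  choose η hηpos hη using hAC
  -- running minimum of the moduli
  set η' : ℕ → ℝ := fun j => Nat.rec (η 0) (fun n ih => min (η (n + 1)) ih) j with hη'def
  have hη'succ : ∀ j, η' (j + 1) = min (η (j + 1)) (η' j) := fun j => rfl
  have hη'pos : ∀ j, 0 < η' j := by
    intro j
    induction j with
    | zero => exact hηpos 0
    | succ n ih => rw [hη'succ]; exact lt_min (hηpos _) ih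
  have hη'le : ∀ l j, l ≤ j → η' j ≤ η l := by
    intro l j hlj
    induction j with
    | zero => obtain rfl := Nat.le_zero.mp hlj; exact le_of_eq rfl
    | succ n ih =>
        rw [hη'succ]
        rcases Nat.lt_or_ge l (n + 1) with h | h
        · exact le_trans (min_le_right _ _) (ih (Nat.lt_succ_iff.mp h))
        · have : l = n + 1 := le_antisymm hlj h
          subst this; exact min_le_left _ _
  -- the recursive construction
  set St := {x : ℕ × Set Y × ℝ // 0 < x.2.2} with hStdef
  have hnext : ∀ x : St, ∃ z : St,
      z.1.2.2 = min (x.1.2.2 / 2) (η' x.1.1 / 2) ∧ MeasurableSet z.1.2.1 ∧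
      μ z.1.2.1 ≤ ENNReal.ofReal z.1.2.2 ∧
      ENNReal.ofReal ε < eLpNorm (z.1.2.1.indicator (fun y => g y (v z.1.1 y))) r μ := by
    intro x
    have hδ : 0 < min (x.1.2.2 / 2) (η' x.1.1 / 2) :=
      lt_min (half_pos x.2) (half_pos (hη'pos _))
    obtain ⟨i, s, hs, hμs, hlt⟩ := H _ hδ
    exact ⟨⟨(i, s, min (x.1.2.2 / 2) (η' x.1.1 / 2)), hδ⟩, rfl, hs, hμs, hlt⟩
  choose next hnextδ hnextmeas hnextμ hnextlt using hnext
  set x0 : St := ⟨(0, ∅, η' 0), hη'pos 0⟩ with hx0def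
  set sq : ℕ → St := fun k => next^[k] x0 with hsqdef
  have hshift : ∀ k, sq (k + 1) = next (sq k) := fun k => Function.iterate_succ_apply' next k x0
  set I : ℕ → ℕ := fun k => (next (sq k)).1.1 with hIdef
  set A : ℕ → Set Y := fun k => (next (sq k)).1.2.1 with hAdef
  set D : ℕ → ℝ := fun k => (next (sq k)).1.2.2 with hDdef
  have hDpos : ∀ k, 0 < D k := fun k => (next (sq k)).2
  have hAmeas : ∀ k, MeasurableSet (A k) := fun k => hnextmeas (sq k)
  have hAμ : ∀ k, μ (A k) ≤ ENNReal.ofReal (D k) := fun k => hnextμ (sq k)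
  have hAlt : ∀ k, ENNReal.ofReal ε <
      eLpNorm ((A k).indicator (fun y => g y (v (I k) y))) r μ := fun k => hnextlt (sq k)
  have hDsucc : ∀ k, D (k + 1) = min (D k / 2) (η' (I k) / 2) := by
    intro k
    show (next (sq (k + 1))).1.2.2 = min ((next (sq k)).1.2.2 / 2) (η' (next (sq k)).1.1 / 2)
    rw [hshift k]
    exact hnextδ (next (sq k))
  have hDhalf : ∀ k, D (k + 1) ≤ D k / 2 := fun k => (hDsucc k) ▸ min_le_left _ _
  have hDη : ∀ k, D (k + 1) ≤ η' (I k) / 2 := fun k => (hDsucc k) ▸ min_le_right _ _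
  -- strict monotonicity of the indices
  have hIlt : ∀ k, I k < I (k + 1) := by
    intro k
    by_contra hle
    push_neg at hle
    have h1 : D (k + 1) ≤ η (I (k + 1)) := by
      calc D (k + 1) ≤ η' (I k) / 2 := hDη k
        _ ≤ η' (I k) := by linarith [hη'pos (I k)]
        _ ≤ η (I (k + 1)) := hη'le _ _ hle
    have h2 : eLpNorm ((A (k + 1)).indicator (fun y => g y (v (I (k + 1)) y))) r μ
        ≤ ENNReal.ofReal (ε / 2) :=
      hη (I (k + 1)) _ (hAmeas (k + 1))
        (le_trans (hAμ (k + 1)) (ENNReal.ofReal_le_ofReal h1))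
    have h3 := lt_of_lt_of_le (hAlt (k + 1)) h2
    exact absurd h3 (not_lt.2 (ENNReal.ofReal_le_ofReal (by linarith)))
  have hImono : StrictMono I := strictMono_nat_of_lt_succ hIlt
  -- geometric decay of D
  have hDgeo : ∀ m j, D (m + j) ≤ D m * (1 / 2 : ℝ) ^ j := by
    intro m j
    induction j with
    | zero => simp
    | succ n ih =>
        have := hDhalf (m + n)
        calc D (m + (n + 1)) = D ((m + n) + 1) := by ring_nf
          _ ≤ D (m + n) / 2 := hDhalf (m + n)
          _ ≤ (D m * (1 / 2 : ℝ) ^ n) / 2 := by linarith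
          _ = D m * (1 / 2 : ℝ) ^ (n + 1) := by ring
  -- tail measure bound
  have htail : ∀ k, μ (⋃ j, A (k + 1 + j)) ≤ ENNReal.ofReal (η' (I k)) := by
    intro k
    calc μ (⋃ j, A (k + 1 + j)) ≤ ∑' j, μ (A (k + 1 + j)) := measure_iUnion_le _
      _ ≤ ∑' j, ENNReal.ofReal (D (k + 1) * (1 / 2 : ℝ) ^ j) := by
          refine ENNReal.tsum_le_tsum fun j => le_trans (hAμ _) (ENNReal.ofReal_le_ofReal ?_)
          exact hDgeo (k + 1) j
      _ = ∑' j, ENNReal.ofReal (D (k + 1)) * ENNReal.ofReal ((1 / 2 : ℝ) ^ j) := by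
          exact tsum_congr fun j => ENNReal.ofReal_mul (le_of_lt (hDpos (k + 1)))
      _ = ENNReal.ofReal (D (k + 1)) * ∑' j, (ENNReal.ofReal (1 / 2 : ℝ)) ^ j := by
          rw [← ENNReal.tsum_mul_left]
          exact tsum_congr fun j => by rw [ENNReal.ofReal_pow (by norm_num)]
      _ = ENNReal.ofReal (D (k + 1)) * 2 := by
          congr 1
          rw [show ENNReal.ofReal (1 / 2 : ℝ) = 2⁻¹ by
            rw [ENNReal.ofReal_div_of_pos (by norm_num)]; norm_num]
          rw [ENNReal.tsum_geometric, ENNReal.one_sub_inv_two]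
          simp
      _ ≤ ENNReal.ofReal (η' (I k)) := by
          rw [← ENNReal.ofReal_ofNat, ← ENNReal.ofReal_mul (le_of_lt (hDpos (k + 1)))]
          refine ENNReal.ofReal_le_ofReal ?_
          calc D (k + 1) * 2 ≤ η' (I k) / 2 * 2 :=
                mul_le_mul_of_nonneg_right (hDη k) (by norm_num)
            _ = η' (I k) := by ring
  -- the disjoint sets
  set E : ℕ → Set Y := fun k => A k \ ⋃ j, A (k + 1 + j) with hEdef
  have hEmeas : ∀ k, MeasurableSet (E k) :=
    fun k => (hAmeas k).diff (MeasurableSet.iUnion fun j => hAmeas _)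
  have hdisj : ∀ k l, k < l → Disjoint (E k) (E l) := by
    intro k l hkl
    have hsub : E l ⊆ ⋃ j, A (k + 1 + j) := by
      refine subset_trans (Set.diff_subset) ?_
      have : l = k + 1 + (l - (k + 1)) := by omega
      rw [this]
      exact Set.subset_iUnion (fun j => A (k + 1 + j)) (l - (k + 1))
    exact Set.disjoint_of_subset_right hsub Set.disjoint_sdiff_left
  have hd : Pairwise (Function.onFun Disjoint E) := by
    intro k l hkl
    rcases lt_or_gt_of_ne hkl with h | h
    · exact hdisj k l h
    · exact (hdisj l k h).symm
  -- eLpNorm lower bound on E k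
  have hElb : ∀ k, ENNReal.ofReal (ε / 2) ≤
      eLpNorm ((E k).indicator (fun y => g y (v (I k) y))) r μ := by
    intro k
    set h' : Y → F₂ := fun y => g y (v (I k) y) with hh'def
    have hdecomp : (A k).indicator h' = fun y =>
        (E k).indicator h' y + ((A k) ∩ ⋃ j, A (k + 1 + j)).indicator h' y := by
      funext y
      by_cases hyA : y ∈ A k <;> by_cases hyU : y ∈ ⋃ j, A (k + 1 + j) <;>
        simp [Set.indicator_apply, hEdef, Set.mem_diff, hyA, hyU]
    have hsm : AEStronglyMeasurable h' μ := (hg _ (hv (I k))).aestronglyMeasurable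
    have htri : eLpNorm ((A k).indicator h') r μ ≤
        eLpNorm ((E k).indicator h') r μ +
        eLpNorm (((A k) ∩ ⋃ j, A (k + 1 + j)).indicator h') r μ := by
      rw [hdecomp]
      exact eLpNorm_add_le (hsm.indicator (hEmeas k))
        (hsm.indicator ((hAmeas k).inter (MeasurableSet.iUnion fun j => hAmeas _))) hr1
    have hrest : eLpNorm (((A k) ∩ ⋃ j, A (k + 1 + j)).indicator h') r μ ≤
        ENNReal.ofReal (ε / 2) := by
      refine hη (I k) _ ((hAmeas k).inter (MeasurableSet.iUnion fun j => hAmeas _)) ?_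
      calc μ ((A k) ∩ ⋃ j, A (k + 1 + j)) ≤ μ (⋃ j, A (k + 1 + j)) :=
            measure_mono Set.inter_subset_right
        _ ≤ ENNReal.ofReal (η' (I k)) := htail k
        _ ≤ ENNReal.ofReal (η (I k)) := ENNReal.ofReal_le_ofReal (hη'le _ _ le_rfl)
    have hlt : ENNReal.ofReal ε < eLpNorm ((E k).indicator h') r μ + ENNReal.ofReal (ε / 2) :=
      lt_of_lt_of_le (hAlt k) (le_trans htri (add_le_add_right hrest _))
    have heps : ENNReal.ofReal ε = ENNReal.ofReal (ε / 2) + ENNReal.ofReal (ε / 2) := by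
      rw [← ENNReal.ofReal_add (by linarith) (by linarith)]
      norm_num
    rw [heps] at hlt
    exact le_of_lt ((ENNReal.add_lt_add_iff_right ENNReal.ofReal_ne_top).mp hlt)
  -- conclude via the key lemma
  set c : ℝ≥0∞ := ENNReal.ofReal (ε / 2) ^ r.toReal with hcdef
  have hc : c ≠ 0 :=
    (ENNReal.rpow_pos (ENNReal.ofReal_pos.2 (half_pos hε)) ENNReal.ofReal_ne_top).ne'
  have hlb : ∀ k, c ≤ ∫⁻ y in E k, (‖g y (v (I k) y)‖₊ : ℝ≥0∞) ^ r.toReal ∂μ :=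
    fun k => lb_conv hr0 hr2 (hEmeas k) (hElb k)
  exact no_glue hp1 hp2 hr1 hr2 hg hEmeas hd hu hum (fun k => hvm (I k))
    (sum_bound hp0 hp2 hfast hImono) hc hlb

lemma ind_norm_mono {s t : Set Y} (hst : s ⊆ t) (f : Y → F₂) (y : Y) :
    ‖s.indicator f y‖ ≤ ‖t.indicator f y‖ := by
  by_cases hy : y ∈ s
  · rw [Set.indicator_of_mem hy, Set.indicator_of_mem (hst hy)]
  · rw [Set.indicator_of_notMem hy, norm_zero]
    exact norm_nonneg _

lemma nem_unifTight {p r : ℝ≥0∞} (hp1 : 1 ≤ p) (hp2 : p ≠ ∞) (hr1 : 1 ≤ r) (hr2 : r ≠ ∞)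
    {g : Y → F₁ → F₂}
    (hg : ∀ v : Y → F₁, MemLp v p μ → MemLp (fun y => g y (v y)) r μ)
    {u : Y → F₁} (hu : MemLp u p μ) (hum : StronglyMeasurable u)
    {v : ℕ → Y → F₁} (hv : ∀ k, MemLp (v k) p μ) (hvm : ∀ k, StronglyMeasurable (v k))
    (hfast : ∀ k, eLpNorm (v k - u) p μ ≤ 2⁻¹ ^ k) :
    UnifTight (fun k y => g y (v k y)) r μ := by
  have hp0 : p ≠ 0 := by positivity
  have hr0 : r ≠ 0 := by positivity
  by_contra hcon
  rw [UnifTight] at hcon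
  push_neg at hcon
  obtain ⟨ε, hε, H⟩ := hcon
  set εE : ℝ≥0∞ := (ε : ℝ≥0∞) with hεEdef
  have hεE0 : εE ≠ 0 := by simpa [hεEdef] using hε.ne'
  have hεEtop : εE ≠ ∞ := ENNReal.coe_ne_top
  have hhalfne : εE / 2 ≠ 0 := by
    simp only [ne_eq, ENNReal.div_eq_zero_iff]
    push_neg
    exact ⟨hεE0, by norm_num⟩
  have hhalftop : εE / 2 ≠ ∞ := by
    exact (lt_of_le_of_lt (ENNReal.half_le_self) hεEtop.lt_top).ne
  have hhalflt : εE / 2 < εE := ENNReal.half_lt_self hεE0 hεEtop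
  -- tightness sets for the single functions
  have hT0 : ∀ j : ℕ, ∃ s : Set Y, MeasurableSet s ∧ μ s < ∞ ∧
      eLpNorm (sᶜ.indicator (fun y => g y (v j y))) r μ < εE / 2 :=
    fun j => (hg _ (hv j)).exists_eLpNorm_indicator_compl_lt hr2 hhalfne
  choose T hTmeas hTfin hTlt using hT0
  -- recursive construction
  set St := {x : ℕ × Set Y × Set Y //
    MeasurableSet x.2.2 ∧ μ x.2.2 ≠ ∞ ∧ ∀ j ≤ x.1, T j ⊆ x.2.2} with hStdef
  have hnext : ∀ x : St, ∃ z : St,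
      x.1.1 < z.1.1 ∧
      z.1.2.1 = (x.1.2.2)ᶜ ∩ T z.1.1 ∧
      x.1.2.2 ⊆ z.1.2.2 ∧ z.1.2.1 ⊆ z.1.2.2 ∧
      εE / 2 ≤ eLpNorm (z.1.2.1.indicator (fun y => g y (v z.1.1 y))) r μ := by
    intro x
    obtain ⟨hUmeas, hUfin, hUinv⟩ := x.2
    obtain ⟨i, hi⟩ := H x.1.2.2 hUfin
    have hxi : x.1.1 < i := by
      by_contra hle
      push_neg at hle
      have hsub : (x.1.2.2)ᶜ ⊆ (T i)ᶜ := Set.compl_subset_compl.2 (hUinv i hle)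
      have : eLpNorm ((x.1.2.2)ᶜ.indicator (fun y => g y (v i y))) r μ
          ≤ eLpNorm ((T i)ᶜ.indicator (fun y => g y (v i y))) r μ :=
        eLpNorm_mono (ind_norm_mono hsub _)
      exact absurd hi (not_lt.2 (le_trans this (le_trans (le_of_lt (hTlt i)) hhalflt.le)))
    set S' : Set Y := (x.1.2.2)ᶜ ∩ T i with hS'def
    -- lower bound on S'
    have hdecomp : (x.1.2.2)ᶜ.indicator (fun y => g y (v i y)) = fun y =>
        S'.indicator (fun y => g y (v i y)) y +
        ((x.1.2.2)ᶜ ∩ (T i)ᶜ).indicator (fun y => g y (v i y)) y := by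
      funext y
      by_cases hyU : y ∈ (x.1.2.2)ᶜ <;> by_cases hyT : y ∈ T i <;>
        simp [Set.indicator_apply, hS'def, hyU, hyT]
    have hsm : AEStronglyMeasurable (fun y => g y (v i y)) μ :=
      (hg _ (hv i)).aestronglyMeasurable
    have htri : eLpNorm ((x.1.2.2)ᶜ.indicator (fun y => g y (v i y))) r μ ≤
        eLpNorm (S'.indicator (fun y => g y (v i y))) r μ +
        eLpNorm (((x.1.2.2)ᶜ ∩ (T i)ᶜ).indicator (fun y => g y (v i y))) r μ := by
      rw [hdecomp]
      exact eLpNorm_add_le (hsm.indicator (hUmeas.compl.inter (hTmeas i)))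
        (hsm.indicator (hUmeas.compl.inter (hTmeas i).compl)) hr1
    have hrest : eLpNorm (((x.1.2.2)ᶜ ∩ (T i)ᶜ).indicator (fun y => g y (v i y))) r μ
        ≤ εE / 2 :=
      le_trans (eLpNorm_mono (ind_norm_mono Set.inter_subset_right _)) (hTlt i).le
    have hlt : εE < eLpNorm (S'.indicator (fun y => g y (v i y))) r μ + εE / 2 :=
      lt_of_lt_of_le hi (le_trans htri (add_le_add_right hrest _))
    have hSlb : εE / 2 ≤ eLpNorm (S'.indicator (fun y => g y (v i y))) r μ := by
      by_contra hno
      push_neg at hno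
      have h2 : εE < εE / 2 + εE / 2 :=
        lt_of_lt_of_le hlt (add_le_add_left hno.le _)
      rw [ENNReal.add_halves] at h2
      exact absurd h2 (lt_irrefl _)
    -- the new accumulated set
    set U' : Set Y := x.1.2.2 ∪ ⋃ j ∈ Set.Iic i, T j with hU'def
    have hU'meas : MeasurableSet U' :=
      hUmeas.union (MeasurableSet.biUnion (Set.Iic i).to_countable fun j _ => hTmeas j)
    have hU'fin : μ U' ≠ ∞ := by
      refine (measure_union_lt_top hUfin.lt_top ?_).ne
      exact measure_biUnion_lt_top (Set.finite_Iic i) fun j _ => hTfin j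
    have hU'inv : ∀ j ≤ i, T j ⊆ U' := by
      intro j hj
      exact subset_trans (Set.subset_biUnion_of_mem (Set.mem_Iic.mpr hj)) Set.subset_union_right
    refine ⟨⟨(i, S', U'), hU'meas, hU'fin, hU'inv⟩, hxi, rfl, Set.subset_union_left, ?_, hSlb⟩
    exact subset_trans (Set.inter_subset_right) (hU'inv i le_rfl)
  choose next hnextlt hnextS hnextU1 hnextU2 hnextlb using hnext
  set x0 : St := ⟨(0, ∅, T 0), (hTmeas 0), (hTfin 0).ne, by
    intro j hj; obtain rfl := Nat.le_zero.mp hj; exact subset_rfl⟩ with hx0def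
  set sq : ℕ → St := fun k => next^[k] x0 with hsqdef
  have hshift : ∀ k, sq (k + 1) = next (sq k) := fun k => Function.iterate_succ_apply' next k x0
  set I : ℕ → ℕ := fun k => (next (sq k)).1.1 with hIdef
  set S : ℕ → Set Y := fun k => (next (sq k)).1.2.1 with hSdef
  set U : ℕ → Set Y := fun k => (next (sq k)).1.2.2 with hUdef
  have hIlt : ∀ k, I k < I (k + 1) := by
    intro k
    show (next (sq k)).1.1 < (next (sq (k + 1))).1.1
    conv_lhs => rw [show (next (sq k)) = sq (k + 1) from (hshift k).symm]
    exact hnextlt (sq (k + 1))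
  have hImono : StrictMono I := strictMono_nat_of_lt_succ hIlt
  have hUmono : ∀ k, U k ⊆ U (k + 1) := by
    intro k
    show (next (sq k)).1.2.2 ⊆ (next (sq (k + 1))).1.2.2
    conv_lhs => rw [show (next (sq k)) = sq (k + 1) from (hshift k).symm]
    exact hnextU1 (sq (k + 1))
  have hUmono' : Monotone U := monotone_nat_of_le_succ hUmono
  have hSU : ∀ k, S k ⊆ U k := fun k => hnextU2 (sq k)
  have hScompl : ∀ k, S (k + 1) ⊆ (U k)ᶜ := by
    intro k
    have h1 := hnextS (sq (k + 1))
    show (next (sq (k + 1))).1.2.1 ⊆ (U k)ᶜ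
    rw [h1]
    have : (sq (k + 1)).1.2.2 = U k := by rw [hshift k]
    rw [this]
    exact Set.inter_subset_left
  have hSmeas : ∀ k, MeasurableSet (S k) := by
    intro k
    have h1 := hnextS (sq k)
    show MeasurableSet (next (sq k)).1.2.1
    rw [h1]
    exact ((sq k).2.1.compl).inter (hTmeas _)
  have hdisj : ∀ k l, k < l → Disjoint (S k) (S l) := by
    intro k l hkl
    have hl : l = (l - 1) + 1 := by omega
    have h1 : S l ⊆ (U (l - 1))ᶜ := by rw [hl]; exact hScompl (l - 1)
    have h2 : S l ⊆ (U k)ᶜ :=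
      subset_trans h1 (Set.compl_subset_compl.2 (hUmono' (by omega : k ≤ l - 1)))
    exact Disjoint.mono (hSU k) h2 disjoint_compl_right
  have hd : Pairwise (Function.onFun Disjoint S) := by
    intro k l hkl
    rcases lt_or_gt_of_ne hkl with h | h
    · exact hdisj k l h
    · exact (hdisj l k h).symm
  have hSlb : ∀ k, εE / 2 ≤ eLpNorm ((S k).indicator (fun y => g y (v (I k) y))) r μ :=
    fun k => hnextlb (sq k)
  set c : ℝ≥0∞ := (εE / 2) ^ r.toReal with hcdef
  have hc : c ≠ 0 := (ENNReal.rpow_pos (pos_iff_ne_zero.2 hhalfne) hhalftop).ne'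
  have hlb : ∀ k, c ≤ ∫⁻ y in S k, (‖g y (v (I k) y)‖₊ : ℝ≥0∞) ^ r.toReal ∂μ :=
    fun k => lb_conv hr0 hr2 (hSmeas k) (hSlb k)
  exact no_glue hp1 hp2 hr1 hr2 hg hSmeas hd hu hum (fun k => hvm (I k))
    (sum_bound hp0 hp2 hfast hImono) hc hlb


lemma nem_tendsto {p r : ℝ≥0∞} (hp1 : 1 ≤ p) (hp2 : p ≠ ∞) (hr1 : 1 ≤ r) (hr2 : r ≠ ∞)
    {g : Y → F₁ → F₂}
    (hg : ∀ v : Y → F₁, MemLp v p μ → MemLp (fun y => g y (v y)) r μ)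
    (hcont : ∀ᵐ y ∂μ, Continuous (fun w => g y w))
    {u : Y → F₁} (hu : MemLp u p μ) (hum : StronglyMeasurable u)
    {v : ℕ → Y → F₁} (hv : ∀ k, MemLp (v k) p μ) (hvm : ∀ k, StronglyMeasurable (v k))
    (hae : ∀ᵐ y ∂μ, Tendsto (fun k => v k y) atTop (𝓝 (u y)))
    (hfast : ∀ k, eLpNorm (v k - u) p μ ≤ 2⁻¹ ^ k) :
    Tendsto (fun k => eLpNorm ((fun y => g y (v k y)) - fun y => g y (u y)) r μ)
      atTop (𝓝 0) := by
  refine tendsto_Lp_of_tendsto_ae hr1 hr2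
    (fun n => (hg _ (hv n)).aestronglyMeasurable) (hg _ hu)
    (nem_unifIntegrable hp1 hp2 hr1 hr2 hg hu hum hv hvm hfast)
    (nem_unifTight hp1 hp2 hr1 hr2 hg hu hum hv hvm hfast) ?_
  filter_upwards [hcont, hae] with y hc hv'
  exact (hc.tendsto (u y)).comp hv'


end NemAux2

open NemAux NemAux2


/-- Continuity of the Nemytskii (superposition) operator: if `g : Y × F₁ → F₂` is a
Carathéodory mapping on a σ-finite measure space `(Y, μ)` with `F₁, F₂` separable Banach
spaces, and if `u ↦ g(·, u(·))` maps `L^p(Y; F₁)` into `L^r(Y; F₂)` (`1 ≤ p, r < ∞`), then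
the induced operator `G : L^p(Y; F₁) → L^r(Y; F₂)` is continuous for the norm topologies. -/
theorem stmt9 {Y : Type*} [MeasurableSpace Y] (μ : Measure Y) [SigmaFinite μ]
    {F₁ F₂ : Type*}
    [NormedAddCommGroup F₁] [NormedSpace ℝ F₁] [CompleteSpace F₁]
    [TopologicalSpace.SeparableSpace F₁]
    [NormedAddCommGroup F₂] [NormedSpace ℝ F₂] [CompleteSpace F₂]
    [TopologicalSpace.SeparableSpace F₂]
    (p r : ℝ≥0∞) [Fact (1 ≤ p)] [Fact (1 ≤ r)] (hp2 : p ≠ ⊤) (hr2 : r ≠ ⊤)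
    (g : Y → F₁ → F₂)
    (hmeas : ∀ v : F₁, AEStronglyMeasurable (fun y => g y v) μ)
    (hcont : ∀ᵐ y ∂μ, Continuous (fun v => g y v))
    (hmaps : ∀ u : Lp F₁ p μ, MemLp (fun y => g y (u y)) r μ) :
    ∃ G : Lp F₁ p μ → Lp F₂ r μ,
      (∀ u : Lp F₁ p μ, (G u : Y → F₂) =ᵐ[μ] fun y => g y (u y)) ∧
      Continuous G := by
  have hp1 : 1 ≤ p := Fact.out
  have hr1 : 1 ≤ r := Fact.out
  have hp0 : p ≠ 0 := by positivity
  have hg : ∀ v : Y → F₁, MemLp v p μ → MemLp (fun y => g y (v y)) r μ := by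
    intro v hvmem
    refine (hmaps (hvmem.toLp v)).ae_eq ?_
    filter_upwards [hvmem.coeFn_toLp] with y hy
    rw [hy]
  refine ⟨fun u => (hmaps u).toLp _, fun u => (hmaps u).coeFn_toLp, ?_⟩
  rw [continuous_iff_seqContinuous]
  intro us u₀ hlim
  show Tendsto (fun n => (hmaps (us n)).toLp _) atTop (𝓝 ((hmaps u₀).toLp _))
  rw [Lp.tendsto_Lp_iff_tendsto_eLpNorm']
  have hcongr : ∀ w : Lp F₁ p μ,
      eLpNorm (⇑((hmaps w).toLp _) - ⇑((hmaps u₀).toLp _)) r μ =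
      eLpNorm ((fun y => g y (w y)) - fun y => g y (u₀ y)) r μ := fun w =>
    eLpNorm_congr_ae (((hmaps w).coeFn_toLp).sub ((hmaps u₀).coeFn_toLp))
  apply tendsto_of_subseq_tendsto
  intro ns hns
  have h0 : Tendsto (fun n => eLpNorm (⇑(us (ns n)) - ⇑u₀) p μ) atTop (𝓝 0) :=
    ((Lp.tendsto_Lp_iff_tendsto_eLpNorm' us u₀).mp hlim).comp hns
  have hmeasus : TendstoInMeasure μ (fun n => ⇑(us (ns n))) atTop ⇑u₀ :=
    tendstoInMeasure_of_tendsto_eLpNorm hp0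
      (fun n => (Lp.memLp _).aestronglyMeasurable)
      (Lp.memLp u₀).aestronglyMeasurable h0
  obtain ⟨φ₁, hφ₁mono, hφ₁ae⟩ := hmeasus.exists_seq_tendsto_ae
  have h0' : Tendsto (fun n => eLpNorm (⇑(us (ns (φ₁ n))) - ⇑u₀) p μ) atTop (𝓝 0) :=
    h0.comp hφ₁mono.tendsto_atTop
  have hP : ∀ m, ∀ᶠ k in atTop,
      eLpNorm (⇑(us (ns (φ₁ k))) - ⇑u₀) p μ ≤ 2⁻¹ ^ m := by
    intro m
    have hpos : (0 : ℝ≥0∞) < 2⁻¹ ^ m := by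
      apply ENNReal.pow_pos
      norm_num
    exact (h0'.eventually_lt_const hpos).mono fun k hk => hk.le
  obtain ⟨φ₂, hφ₂mono, hφ₂⟩ := Filter.extraction_forall_of_eventually hP
  refine ⟨φ₁ ∘ φ₂, ?_⟩
  have hae : ∀ᵐ y ∂μ, Tendsto (fun k => (us (ns (φ₁ (φ₂ k)))) y) atTop (𝓝 (u₀ y)) := by
    filter_upwards [hφ₁ae] with y hy
    exact hy.comp hφ₂mono.tendsto_atTop
  have hmain := nem_tendsto hp1 hp2 hr1 hr2 hg hcont (Lp.memLp u₀)
    (Lp.stronglyMeasurable u₀) (fun k => Lp.memLp (us (ns (φ₁ (φ₂ k)))))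
    (fun k => Lp.stronglyMeasurable _) hae hφ₂
  refine Tendsto.congr (fun n => ?_) hmain
  exact (hcongr (us (ns (φ₁ (φ₂ n))))).symm
end
end

section
/- Let (Ω, ℱ, ℙ) be a probability space and X a Polish space (a separable complete metric space, with metric d). A sequence (x_n)_{n ≥ 0} of X-valued random variables converges in probability — i.e. there exists an X-valued random variable x such that ℙ(d(x_n, x) > δ) → 0 as n → ∞ for every δ > 0 — if and only if the following holds: for every pair of subsequences (x_{n_k})_k and (x_{m_k})_k, there exists a further subsequence (k_j)_j such that the joint laws of (x_{n_{k_j}}, x_{m_{k_j}}) on X × X converge weakly to some Borel probability measure ν on X × X satisfying ν({(u, v) ∈ X × X : u = v}) = 1. -/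
open MeasureTheory Filter Topology

noncomputable section

/-- Cauchy in measure implies existence of a limit in measure, on a complete
second-countable metric space. -/
private lemma gk_exists_limit {Ω : Type*} [MeasurableSpace Ω] (P : Measure Ω)
    [IsProbabilityMeasure P]
    {X : Type*} [MetricSpace X] [CompleteSpace X] [SecondCountableTopology X]
    [MeasurableSpace X] [BorelSpace X] [Nonempty X]
    (f : ℕ → Ω → X) (hf : ∀ n, Measurable (f n))
    (hcau : ∀ δ : ℝ, 0 < δ → ∀ ε : ENNReal, 0 < ε → ∃ N : ℕ, ∀ p ≥ N, ∀ q ≥ N,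
      P {ω | δ ≤ dist (f p ω) (f q ω)} ≤ ε) :
    ∃ x : Ω → X, Measurable x ∧ TendstoInMeasure P f atTop x := by
  have key : ∀ k : ℕ, ∃ N : ℕ, ∀ p ≥ N, ∀ q ≥ N,
      P {ω | (2:ℝ)⁻¹ ^ k ≤ dist (f p ω) (f q ω)} ≤ (2:ENNReal)⁻¹ ^ k := by
    intro k
    refine hcau _ (by positivity) _ ?_
    simp [pos_iff_ne_zero]
  choose N hN using key
  set n : ℕ → ℕ := fun k => Nat.rec (N 0) (fun k' nk => max (nk + 1) (N (k'+1))) k with hn_def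
  have hn_succ : ∀ k, n (k+1) = max (n k + 1) (N (k+1)) := fun k => rfl
  have hmono : StrictMono n := by
    refine strictMono_nat_of_lt_succ fun k => ?_
    rw [hn_succ]
    exact lt_of_lt_of_le (Nat.lt_succ_self _) (le_max_left _ _)
  have hnN : ∀ k, N k ≤ n k := by
    intro k
    cases k with
    | zero => exact le_rfl
    | succ k' => rw [hn_succ]; exact le_max_right _ _
  set S : ℕ → Set Ω := fun k => {ω | (2:ℝ)⁻¹ ^ k ≤ dist (f (n k) ω) (f (n (k+1)) ω)} with hS_def
  have hPk : ∀ k, P (S k) ≤ (2:ENNReal)⁻¹ ^ k := fun k =>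
    hN k _ (hnN k) _ ((hnN k).trans (hmono.monotone (Nat.le_succ k)))
  have hsum : (∑' k, P (S k)) ≠ ⊤ := by
    refine ne_top_of_le_ne_top ?_ (ENNReal.tsum_le_tsum hPk)
    simpa only [ENNReal.tsum_geometric, ENNReal.one_sub_inv_two, inv_inv] using ENNReal.ofNat_ne_top
  have hae := ae_eventually_notMem hsum
  classical
  have hconv : ∀ᵐ ω ∂P, ∃ l, Tendsto (fun k => f (n k) ω) atTop (𝓝 l) := by
    filter_upwards [hae] with ω hω
    obtain ⟨K, hK⟩ := eventually_atTop.1 hω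
    have hc2 : CauchySeq (fun k => f (n (k + K)) ω) := by
      apply cauchySeq_of_le_geometric (2:ℝ)⁻¹ ((2:ℝ)⁻¹ ^ K) (by norm_num)
      intro k
      have hk' : ω ∉ S (k + K) := hK (k + K) (Nat.le_add_left K k)
      have hd : dist (f (n (k + K)) ω) (f (n (k + K + 1)) ω) ≤ (2:ℝ)⁻¹ ^ (k + K) := by
        simp only [hS_def, Set.mem_setOf_eq, not_le] at hk'
        exact hk'.le
      have hidx : k + 1 + K = k + K + 1 := by omega
      calc dist (f (n (k + K)) ω) (f (n (k + 1 + K)) ω)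
          = dist (f (n (k + K)) ω) (f (n (k + K + 1)) ω) := by rw [hidx]
        _ ≤ (2:ℝ)⁻¹ ^ (k + K) := hd
        _ = (2:ℝ)⁻¹ ^ K * (2:ℝ)⁻¹ ^ k := by rw [← pow_add]; ring_nf
    have hc : CauchySeq (fun k => f (n k) ω) := (cauchySeq_shift K).mp hc2
    exact cauchySeq_tendsto_of_complete hc
  set g : Ω → X := fun ω =>
    if h : ∃ l, Tendsto (fun k => f (n k) ω) atTop (𝓝 l) then h.choose
    else Classical.arbitrary X with hg_def
  have htg : ∀ᵐ ω ∂P, Tendsto (fun k => f (n k) ω) atTop (𝓝 (g ω)) := by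
    filter_upwards [hconv] with ω hω
    simp only [hg_def, dif_pos hω]
    exact hω.choose_spec
  have hgm : AEMeasurable g P :=
    aemeasurable_of_tendsto_metrizable_ae atTop (fun k => (hf (n k)).aemeasurable) htg
  refine ⟨hgm.mk g, hgm.measurable_mk, ?_⟩
  have htx : ∀ᵐ ω ∂P, Tendsto (fun k => f (n k) ω) atTop (𝓝 (hgm.mk g ω)) := by
    filter_upwards [htg, hgm.ae_eq_mk] with ω h1 h2
    rwa [h2] at h1
  have hsub : TendstoInMeasure P (fun k => f (n k)) atTop (hgm.mk g) :=
    tendstoInMeasure_of_tendsto_ae (fun k => (hf (n k)).aestronglyMeasurable) htx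
  rw [tendstoInMeasure_iff_dist] at hsub ⊢
  intro δ hδ
  rw [ENNReal.tendsto_atTop_zero]
  intro ε hε
  obtain ⟨N₁, hN₁⟩ := hcau (δ/2) (by positivity) (ε/2) (ENNReal.half_pos hε.ne')
  have h2 := hsub (δ/2) (by positivity)
  rw [ENNReal.tendsto_atTop_zero] at h2
  obtain ⟨N₂, hN₂⟩ := h2 (ε/2) (ENNReal.half_pos hε.ne')
  set k := max N₁ N₂ with hk_def
  have hk1 : N₁ ≤ n k := le_trans (le_max_left _ _) hmono.le_apply
  refine ⟨n k, fun p hp => ?_⟩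
  have hsubset : {ω | δ ≤ dist (f p ω) (hgm.mk g ω)} ⊆
      {ω | δ/2 ≤ dist (f p ω) (f (n k) ω)} ∪ {ω | δ/2 ≤ dist (f (n k) ω) (hgm.mk g ω)} := by
    intro ω hω
    simp only [Set.mem_setOf_eq] at hω
    simp only [Set.mem_union, Set.mem_setOf_eq]
    by_contra hcon
    push_neg at hcon
    obtain ⟨h1, h2⟩ := hcon
    have := dist_triangle (f p ω) (f (n k) ω) (hgm.mk g ω)
    linarith
  calc P {ω | δ ≤ dist (f p ω) (hgm.mk g ω)}
      ≤ P ({ω | δ/2 ≤ dist (f p ω) (f (n k) ω)} ∪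
          {ω | δ/2 ≤ dist (f (n k) ω) (hgm.mk g ω)}) := measure_mono hsubset
    _ ≤ P {ω | δ/2 ≤ dist (f p ω) (f (n k) ω)} +
        P {ω | δ/2 ≤ dist (f (n k) ω) (hgm.mk g ω)} := measure_union_le _ _
    _ ≤ ε/2 + ε/2 := add_le_add (hN₁ p (hk1.trans hp) (n k) hk1) (hN₂ k (le_max_right _ _))
    _ = ε := ENNReal.add_halves ε

/-- Criterion for convergence in probability on a Polish space (Gyöngy–Krylov): a sequence
of `X`-valued random variables converges in probability if and only if for every pair of
subsequences there is a further subsequence along which the joint laws converge weakly to a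
probability measure concentrated on the diagonal of `X × X`. -/
theorem stmt17 {Ω : Type*} [MeasurableSpace Ω] (P : Measure Ω) [IsProbabilityMeasure P]
    {X : Type*} [MetricSpace X] [CompleteSpace X] [TopologicalSpace.SeparableSpace X]
    [MeasurableSpace X] [BorelSpace X]
    (xs : ℕ → Ω → X) (hxs : ∀ n, Measurable (xs n)) :
    (∃ x : Ω → X, Measurable x ∧ TendstoInMeasure P xs atTop x) ↔
    (∀ n m : ℕ → ℕ, StrictMono n → StrictMono m →
      ∃ (j : ℕ → ℕ) (ν : Measure (X × X)),
        StrictMono j ∧ IsProbabilityMeasure ν ∧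
        ν {z : X × X | z.1 = z.2} = 1 ∧
        ∀ φ : BoundedContinuousFunction (X × X) ℝ,
          Tendsto
            (fun i => ∫ z, φ z ∂(Measure.map (fun ω => (xs (n (j i)) ω, xs (m (j i)) ω)) P))
            atTop (𝓝 (∫ z, φ z ∂ν))) := by
  haveI : SecondCountableTopology X := UniformSpace.secondCountable_of_separable X
  haveI : Nonempty Ω := by
    by_contra hne
    rw [not_nonempty_iff] at hne
    have h1 : P Set.univ = 1 := measure_univ
    rw [show (Set.univ : Set Ω) = ∅ from Set.eq_empty_of_isEmpty _, measure_empty] at h1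
    exact zero_ne_one h1
  haveI : Nonempty X := ⟨xs 0 (Classical.arbitrary Ω)⟩
  have hdm : MeasurableSet {z : X × X | z.1 = z.2} :=
    (isClosed_eq continuous_fst continuous_snd).measurableSet
  constructor
  · rintro ⟨x, hxm, hxP⟩ n m hn hm
    have h1 : TendstoInMeasure P (fun k => xs (n k)) atTop x :=
      fun ε hε => (hxP ε hε).comp hn.tendsto_atTop
    obtain ⟨j1, hj1, hae1⟩ := h1.exists_seq_tendsto_ae
    have h2 : TendstoInMeasure P (fun k => xs (m (j1 k))) atTop x :=
      fun ε hε => (hxP ε hε).comp ((hm.comp hj1).tendsto_atTop)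
    obtain ⟨j2, hj2, hae2⟩ := h2.exists_seq_tendsto_ae
    have hmx : Measurable (fun ω => (x ω, x ω)) := hxm.prodMk hxm
    refine ⟨j1 ∘ j2, Measure.map (fun ω => (x ω, x ω)) P, hj1.comp hj2,
      Measure.isProbabilityMeasure_map hmx.aemeasurable, ?_, ?_⟩
    · rw [Measure.map_apply hmx hdm]
      have : (fun ω => (x ω, x ω)) ⁻¹' {z : X × X | z.1 = z.2} = Set.univ := by
        ext ω; simp
      rw [this, measure_univ]
    · intro φ
      have hae1' : ∀ᵐ ω ∂P, Tendsto (fun i => xs (n (j1 (j2 i))) ω) atTop (𝓝 (x ω)) := by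
        filter_upwards [hae1] with ω hω
        exact hω.comp hj2.tendsto_atTop
      have e1 : ∀ i, ∫ z, φ z ∂(Measure.map
            (fun ω => (xs (n ((j1 ∘ j2) i)) ω, xs (m ((j1 ∘ j2) i)) ω)) P)
          = ∫ ω, φ (xs (n ((j1 ∘ j2) i)) ω, xs (m ((j1 ∘ j2) i)) ω) ∂P := fun i =>
        integral_map ((hxs _).prodMk (hxs _)).aemeasurable
          φ.continuous.aestronglyMeasurable
      have e2 : ∫ z, φ z ∂(Measure.map (fun ω => (x ω, x ω)) P)
          = ∫ ω, φ (x ω, x ω) ∂P :=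
        integral_map hmx.aemeasurable φ.continuous.aestronglyMeasurable
      rw [funext e1, e2]
      refine tendsto_integral_of_dominated_convergence (fun _ => ‖φ‖)
        (fun i => (φ.continuous.measurable.comp ((hxs _).prodMk (hxs _))).aestronglyMeasurable)
        (integrable_const _) (fun i => Eventually.of_forall fun ω => φ.norm_coe_le_norm _) ?_
      filter_upwards [hae1', hae2] with ω h1' h2'
      exact (φ.continuous.tendsto _).comp (h1'.prodMk_nhds h2')
  · intro h
    have hcau : ∀ δ : ℝ, 0 < δ → ∀ ε : ENNReal, 0 < ε → ∃ N : ℕ, ∀ p ≥ N, ∀ q ≥ N,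
        P {ω | δ ≤ dist (xs p ω) (xs q ω)} ≤ ε := by
      by_contra hc
      push_neg at hc
      obtain ⟨δ, hδ, ε, hε, hc⟩ := hc
      choose p hp q hq hgt using hc
      set b : ℕ → ℕ := fun k => Nat.rec 0 (fun _ bk => max (p bk) (q bk) + 1) k with hb_def
      have hb_succ : ∀ k, b (k+1) = max (p (b k)) (q (b k)) + 1 := fun k => rfl
      have hn : StrictMono (fun k => p (b k)) := by
        refine strictMono_nat_of_lt_succ fun k => ?_
        calc p (b k) < max (p (b k)) (q (b k)) + 1 :=
              Nat.lt_succ_of_le (le_max_left _ _)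
          _ = b (k+1) := (hb_succ k).symm
          _ ≤ p (b (k+1)) := hp _
      have hm : StrictMono (fun k => q (b k)) := by
        refine strictMono_nat_of_lt_succ fun k => ?_
        calc q (b k) < max (p (b k)) (q (b k)) + 1 :=
              Nat.lt_succ_of_le (le_max_right _ _)
          _ = b (k+1) := (hb_succ k).symm
          _ ≤ q (b (k+1)) := hq _
      obtain ⟨j, ν, hj, hν, hdiag, hweak⟩ := h _ _ hn hm
      haveI := hν
      have hpair : ∀ i, Measurable (fun ω => (xs (p (b (j i))) ω, xs (q (b (j i))) ω)) :=
        fun i => (hxs _).prodMk (hxs _)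
      set μs : ℕ → ProbabilityMeasure (X × X) := fun i =>
        ⟨Measure.map (fun ω => (xs (p (b (j i))) ω, xs (q (b (j i))) ω)) P,
          Measure.isProbabilityMeasure_map (hpair i).aemeasurable⟩ with hμs_def
      set νp : ProbabilityMeasure (X × X) := ⟨ν, hν⟩ with hνp_def
      have htendsto : Tendsto μs atTop (𝓝 νp) :=
        ProbabilityMeasure.tendsto_iff_forall_integral_tendsto.mpr fun φ => hweak φ
      set F : Set (X × X) := {z | δ ≤ dist z.1 z.2} with hF_def
      have hFc : IsClosed F := isClosed_le continuous_const (continuous_fst.dist continuous_snd)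
      have hlimsup := ProbabilityMeasure.limsup_measure_closed_le_of_tendsto htendsto hFc
      have hν0 : ν F = 0 := by
        have hsubset : F ⊆ {z : X × X | z.1 = z.2}ᶜ := by
          intro z hz
          simp only [hF_def, Set.mem_setOf_eq] at hz
          simp only [Set.mem_compl_iff, Set.mem_setOf_eq]
          intro heq
          rw [heq, dist_self] at hz
          linarith
        have hcompl : ν {z : X × X | z.1 = z.2}ᶜ = 0 := by
          rw [measure_compl hdm (measure_ne_top ν _), hdiag, measure_univ, tsub_self]
        exact le_antisymm ((measure_mono hsubset).trans hcompl.le) zero_le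
      have hle : ∀ i, ε ≤ (μs i : Measure (X × X)) F := by
        intro i
        have hmap : (μs i : Measure (X × X)) F =
            P {ω | δ ≤ dist (xs (p (b (j i))) ω) (xs (q (b (j i))) ω)} := by
          rw [show (μs i : Measure (X × X)) =
            Measure.map (fun ω => (xs (p (b (j i))) ω, xs (q (b (j i))) ω)) P from rfl,
            Measure.map_apply (hpair i) hFc.measurableSet]
          rfl
        rw [hmap]
        exact (hgt (b (j i))).le
      have heps : ε ≤ limsup (fun i => (μs i : Measure (X × X)) F) atTop := by
        calc ε = limsup (fun _ : ℕ => ε) atTop := (limsup_const ε).symm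
          _ ≤ _ := limsup_le_limsup (Eventually.of_forall hle)
      have : ε ≤ (0 : ENNReal) := by
        calc ε ≤ limsup (fun i => (μs i : Measure (X × X)) F) atTop := heps
          _ ≤ (νp : Measure (X × X)) F := hlimsup
          _ = 0 := hν0
      exact absurd (le_antisymm this zero_le) hε.ne'
    exact gk_exists_limit P xs hxs hcau
end
end
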